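/- arXiv:1804.02531 — 5 statements merged into one kernel-verified Lean document; each statement's English description precedes it below -/
import Mathlib

section
/- Let m ≥ 1 and n ≥ 2 be integers, and let (r_1,…,r_t) and (ν_1,…,ν_t) be sequences of positive integers such that Σ_{j=1}^t r_j = m and the ν_j are pairwise distinct. If for some 1 ≤ i ≤ t the sum Σ_{j=1}^i r_j/n^{ν_j} is strictly less than 1, then Σ_{j=1}^i r_j/n^{ν_j} ≤ 1 − ς_{n,m}. -/
open Finset Filter Topology

/-- A code `(v 0, …, v (m-1))` is *uniquely decodable* if any two nonempty sequences of
indices whose corresponding concatenations of code words coincide are equal. -/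
def IsUDCode {X : Type*} {m : ℕ} (v : Fin m → List X) : Prop :=
  ∀ s t : List (Fin m), s ≠ [] → t ≠ [] →
    (s.map v).flatten = (t.map v).flatten → s = t

/-- A *prefix code*: an injective sequence of nonempty words where no code word
is a prefix of another. -/
def IsPrefixCode {X : Type*} {m : ℕ} (v : Fin m → List X) : Prop :=
  Function.Injective v ∧ (∀ i, v i ≠ []) ∧ ∀ i j, i ≠ j → ¬ v i <+: v j

/-- The set of uniquely decodable codes over an `n`-letter alphabet with
length distribution `L`. -/
def UD (n : ℕ) {m : ℕ} (L : Fin m → ℕ) : Set (Fin m → List (Fin n)) :=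
  {v | (∀ i, (v i).length = L i) ∧ IsUDCode v}

/-- The set of prefix codes over an `n`-letter alphabet with length distribution `L`. -/
def PR (n : ℕ) {m : ℕ} (L : Fin m → ℕ) : Set (Fin m → List (Fin n)) :=
  {v | (∀ i, (v i).length = L i) ∧ IsPrefixCode v}

/-- `ρ_{n,L} = |PR_n(L)| / |UD_n(L)|`. -/
noncomputable def rho (n : ℕ) {m : ℕ} (L : Fin m → ℕ) : ℝ :=
  ((PR n L).ncard : ℝ) / ((UD n L).ncard : ℝ)

/-- `ξ_{n,m} = inf_{L ∈ ℒ_{n,m}} ρ_{n,L}`. -/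
noncomputable def xi (n m : ℕ) : ℝ :=
  sInf {r : ℝ | ∃ L : Fin m → ℕ, (∀ i, 1 ≤ L i) ∧ (UD n L).Nonempty ∧ r = rho n L}

/-- `ς_{n,m} = (n - (m mod (n-1))) / n^{⌊m/(n-1)⌋ + 1}`. -/
noncomputable def varsigma (n m : ℕ) : ℝ :=
  ((n : ℝ) - (m % (n - 1) : ℕ)) / (n : ℝ) ^ (m / (n - 1) + 1)

/-- `q_{n,m}`: `1` if `n ≥ m`, and `(m-1)!/(m-1)^{m-1}` if `n < m`. -/
noncomputable def qnm (n m : ℕ) : ℝ :=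
  if m ≤ n then 1 else (Nat.factorial (m - 1) : ℝ) / ((m - 1 : ℕ) : ℝ) ^ (m - 1)

/-- `ϖ_{n,m} = ∏_{i=1}^{m-1} (1 - (1 - n^{-i})/(n-1))`. -/
noncomputable def varpi (n m : ℕ) : ℝ :=
  ∏ i ∈ Finset.Icc 1 (m - 1), (1 - (1 - 1 / (n : ℝ) ^ i) / ((n : ℝ) - 1))

/-- `η_{n,m} = 1 + Σ_{i=1}^{m-1} C(m-1,i)/(n^i - 1)`. -/
noncomputable def eta (n m : ℕ) : ℝ :=
  1 + ∑ i ∈ Finset.Icc 1 (m - 1), ((m - 1).choose i : ℝ) / ((n : ℝ) ^ i - 1)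


/-- digit sum in base n -/
def dsum (n x : ℕ) : ℕ := (Nat.digits n x).sum

lemma dsum_zero (n : ℕ) : dsum n 0 = 0 := by simp [dsum]

lemma dsum_def (n : ℕ) (hn : 2 ≤ n) (x : ℕ) : dsum n x = x % n + dsum n (x / n) := by
  rcases Nat.eq_zero_or_pos x with rfl | hx
  · simp [dsum]
  · rw [dsum, Nat.digits_def' (by omega) hx, List.sum_cons]; rfl

lemma dsum_lt (n : ℕ) (hn : 2 ≤ n) {x : ℕ} (hx : x < n) : dsum n x = x := by
  rw [dsum_def n hn, Nat.mod_eq_of_lt hx, Nat.div_eq_of_lt hx, dsum_zero]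
  omega

lemma dsum_pos (n : ℕ) (hn : 2 ≤ n) : ∀ x, 0 < x → 0 < dsum n x := by
  intro x
  induction x using Nat.strong_induction_on with
  | _ x ih =>
    intro hx
    rw [dsum_def n hn]
    rcases Nat.eq_zero_or_pos (x % n) with h | h
    · have h1 : n ∣ x := Nat.dvd_of_mod_eq_zero h
      have h2 : 0 < x / n := Nat.div_pos (Nat.le_of_dvd hx h1) (by omega)
      have h3 : x / n < x := Nat.div_lt_self hx (by omega)
      have := ih _ h3 h2
      omega
    · omega

lemma dsum_succ_le (n : ℕ) (hn : 2 ≤ n) : ∀ x, dsum n (x + 1) ≤ dsum n x + 1 := by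
  intro x
  induction x using Nat.strong_induction_on with
  | _ x ih =>
    have hq := Nat.div_add_mod x n
    have hmod : x % n < n := Nat.mod_lt x (by omega)
    rcases lt_or_ge (x % n + 1) n with h | h
    · have e1 : x + 1 = (x % n + 1) + n * (x / n) := by omega
      have h1 : (x + 1) % n = x % n + 1 := by
        rw [e1, Nat.add_mul_mod_self_left, Nat.mod_eq_of_lt h]
      have h2 : (x + 1) / n = x / n := by
        rw [e1, Nat.add_mul_div_left _ _ (by omega : 0 < n), Nat.div_eq_of_lt h]
        omega
      rw [dsum_def n hn (x+1), dsum_def n hn x, h1, h2]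
      omega
    · have e2' : n * (x / n + 1) = n * (x / n) + n := by ring
      have e2 : x + 1 = n * (x / n + 1) := by omega
      have h1 : (x + 1) % n = 0 := by rw [e2]; exact Nat.mul_mod_right n _
      have h2 : (x + 1) / n = x / n + 1 := by
        rw [e2, Nat.mul_div_cancel_left _ (by omega : 0 < n)]
      have hlt : x / n < x := Nat.div_lt_self (by omega) (by omega)
      have := ih (x / n) hlt
      rw [dsum_def n hn (x+1), dsum_def n hn x, h1, h2]
      omega


lemma dsum_add_pow_le (n : ℕ) (hn : 2 ≤ n) :
    ∀ e x, dsum n (x + n ^ e) ≤ dsum n x + 1 := by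
  intro e
  induction e with
  | zero => intro x; simpa using dsum_succ_le n hn x
  | succ e ih =>
    intro x
    rcases Nat.eq_zero_or_pos x with rfl | hx
    · simp only [Nat.zero_add, dsum_zero]
      rw [dsum_def n hn (n ^ (e+1))]
      have h1 : n ^ (e + 1) = 0 + n ^ e * n := by ring
      rw [h1, Nat.add_mul_div_right _ _ (by omega : 0 < n),
        Nat.add_mul_mod_self_right]
      simpa [dsum_zero] using ih 0
    · have h1 : x + n ^ (e+1) = x + n ^ e * n := by ring
      rw [h1, dsum_def n hn (x + n ^ e * n), Nat.add_mul_div_right _ _ (by omega : 0 < n),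
        Nat.add_mul_mod_self_right, dsum_def n hn x]
      have := ih (x / n)
      omega

lemma dsum_add_mul_pow_le (n : ℕ) (hn : 2 ≤ n) (x e : ℕ) :
    ∀ w, dsum n (x + w * n ^ e) ≤ dsum n x + w := by
  intro w
  induction w with
  | zero => simp
  | succ w ih =>
    have h1 : x + (w + 1) * n ^ e = (x + w * n ^ e) + n ^ e := by ring
    rw [h1]
    have := dsum_add_pow_le n hn e (x + w * n ^ e)
    omega

lemma dsum_concat (n : ℕ) (hn : 2 ≤ n) :
    ∀ e C R, R < n ^ e → dsum n (C * n ^ e + R) = dsum n C + dsum n R := by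
  intro e
  induction e with
  | zero =>
    intro C R hR
    simp only [pow_zero, Nat.lt_one_iff] at hR
    subst hR
    simp [dsum_zero]
  | succ e ih =>
    intro C R hR
    have hq := Nat.div_add_mod R n
    have h1 : C * n ^ (e+1) + R = (C * n ^ e + R / n) * n + R % n := by
      have e1 : C * n ^ (e + 1) = (C * n ^ e) * n := by ring
      have e2 : (C * n ^ e + R / n) * n = (C * n ^ e) * n + n * (R / n) := by ring
      omega
    have hRn : R / n < n ^ e := by
      rw [Nat.div_lt_iff_lt_mul (by omega : 0 < n)]
      calc R < n ^ (e+1) := hR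
        _ = n ^ e * n := by ring
    have hmod : R % n < n := Nat.mod_lt R (by omega)
    have h2 : (C * n ^ (e+1) + R) % n = R % n := by
      rw [h1, Nat.mul_add_mod']
      exact Nat.mod_eq_of_lt hmod
    have h3 : (C * n ^ (e+1) + R) / n = C * n ^ e + R / n := by
      rw [h1, add_comm, Nat.add_mul_div_right _ _ (by omega : 0 < n),
        Nat.div_eq_of_lt hmod, Nat.zero_add]
    rw [dsum_def n hn (C * n ^ (e+1) + R), h2, h3, ih _ _ hRn, dsum_def n hn R]
    omega

lemma dsum_block (n : ℕ) (hn : 2 ≤ n) :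
    ∀ k s', s' ≤ n - 1 → dsum n (n ^ (k+1) - n + s') = k * (n-1) + s' := by
  intro k
  induction k with
  | zero =>
    intro s' hs'
    have h1 : n ^ (0+1) - n + s' = s' := by
      have : n ^ (0+1) = n := by ring
      omega
    rw [h1, dsum_lt n hn (by omega)]
    omega
  | succ k ih =>
    intro s' hs'
    have hP : n ≤ n ^ (k+1) := Nat.le_self_pow (by omega) n
    have hQ : n ^ (k+1+1) = n * n ^ (k+1) := by ring
    have hQ2 : n ^ (k+1) ≤ n * n ^ (k+1) := Nat.le_mul_of_pos_left _ (by omega)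
    have hsub : (n - 1) * n ^ (k+1) = n * n ^ (k+1) - n ^ (k+1) := by
      rw [Nat.sub_mul, one_mul]
    have h1 : n ^ (k+1+1) - n + s' = (n - 1) * n ^ (k+1) + (n ^ (k+1) - n + s') := by
      omega
    have h2 : n ^ (k+1) - n + s' < n ^ (k+1) := by omega
    rw [h1, dsum_concat n hn (k+1) _ _ h2, ih s' hs', dsum_lt n hn (by omega : n - 1 < n)]
    ring_nf

open Finset in
lemma dsum_sum_le (n : ℕ) (hn : 2 ≤ n) (F : Finset ℕ) (w e : ℕ → ℕ) :
    dsum n (∑ j ∈ F, w j * n ^ e j) ≤ ∑ j ∈ F, w j := by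
  induction F using Finset.cons_induction with
  | empty => simp [dsum_zero]
  | cons a F ha ih =>
    rw [Finset.sum_cons, Finset.sum_cons, add_comm]
    have := dsum_add_mul_pow_le n hn (∑ j ∈ F, w j * n ^ e j) (e a) (w a)
    omega

lemma dsum_ge (n : ℕ) (hn : 2 ≤ n) (M N A : ℕ)
    (hN : M / (n-1) + 1 ≤ N)
    (hA1 : n ^ N < A + (n - M % (n-1)) * n ^ (N - M/(n-1) - 1))
    (hA2 : A < n ^ N) : M + 1 ≤ dsum n A := by
  set k := M / (n-1) with hk
  set s := M % (n-1) with hs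
  have hsn : s < n - 1 := Nat.mod_lt _ (by omega)
  have hM : (n-1) * k + s = M := Nat.div_add_mod M (n-1)
  set e := N - k - 1 with he
  have hNe : N = (k+1) + e := by omega
  have hpow : n ^ N = n ^ (k+1) * n ^ e := by rw [hNe, pow_add]
  have hnk : n ≤ n ^ (k+1) := Nat.le_self_pow (Nat.succ_ne_zero k) n
  clear_value k s e
  clear hk hs he hN
  -- B := n^(k+1) - n + s
  obtain ⟨B, hB⟩ : ∃ B, B = n ^ (k+1) - n + s := ⟨_, rfl⟩
  have hBsum : B + (n - s) = n ^ (k+1) := by omega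
  have hBe : B * n ^ e + (n - s) * n ^ e = n ^ N := by
    rw [hpow, ← Nat.add_mul, hBsum]
  have hA1' : B * n ^ e < A := by omega
  clear hA1
  have hA1 : B * n ^ e < A := hA1'
  -- decompose A
  have hRlt : A % n ^ e < n ^ e := Nat.mod_lt _ (by positivity)
  have hAd : A = (A / n ^ e) * n ^ e + A % n ^ e := (Nat.div_add_mod' A (n ^ e)).symm
  obtain ⟨C, hC⟩ : ∃ C, C = A / n ^ e := ⟨_, rfl⟩
  obtain ⟨R, hR⟩ : ∃ R, R = A % n ^ e := ⟨_, rfl⟩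
  rw [← hC, ← hR] at hAd
  rw [← hR] at hRlt
  have hdsA : dsum n A = dsum n C + dsum n R := by
    rw [hAd]; exact dsum_concat n hn e C R hRlt
  clear hC hR
  have hCB : B ≤ C := by
    by_contra hc
    push_neg at hc
    have h1 : C * n ^ e + R < (C + 1) * n ^ e := by
      have : (C + 1) * n ^ e = C * n ^ e + n ^ e := by ring
      omega
    have h2 : (C + 1) * n ^ e ≤ B * n ^ e := Nat.mul_le_mul_right _ (by omega)
    omega
  have hCub : C < n ^ (k+1) := by
    by_contra hc
    push_neg at hc
    have h1 : n ^ (k+1) * n ^ e ≤ C * n ^ e := Nat.mul_le_mul_right _ hc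
    omega
  rcases eq_or_lt_of_le hCB with hCeq | hClt
  · -- C = B, so R >= 1
    rw [hCeq] at hA1
    have hRpos : 0 < R := by omega
    have h1 : dsum n C = k * (n-1) + s := by
      rw [← hCeq, hB]; exact dsum_block n hn k s (by omega)
    have h2 := dsum_pos n hn R hRpos
    have h3 : k * (n-1) = (n-1) * k := by ring
    omega
  · -- C > B
    obtain ⟨s', hs'⟩ : ∃ x, x = s + (C - B) := ⟨_, rfl⟩
    have h0 : s' ≤ n - 1 := by omega
    have hCval : C = n ^ (k+1) - n + s' := by omega
    have h1 : dsum n C = k * (n-1) + s' := by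
      rw [hCval]; exact dsum_block n hn k _ h0
    have h3 : k * (n-1) = (n-1) * k := by ring
    omega

lemma varsigma_succ_le (n : ℕ) (hn : 2 ≤ n) (m : ℕ) :
    varsigma n (m + 1) ≤ varsigma n m := by
  have hn1 : 0 < n - 1 := by omega
  have hsn : m % (n-1) < n - 1 := Nat.mod_lt _ hn1
  have hM : (n-1) * (m / (n-1)) + m % (n-1) = m := Nat.div_add_mod m (n-1)
  have hcomm : (m / (n-1)) * (n-1) = (n-1) * (m / (n-1)) := by ring
  have h1 : m + 1 = (m % (n-1) + 1) + (m / (n-1)) * (n - 1) := by omega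
  have hmod : (m + 1) % (n-1) = (m % (n-1) + 1) % (n-1) := by
    rw [h1, Nat.add_mul_mod_self_right]
  have hdiv : (m + 1) / (n-1) = (m % (n-1) + 1) / (n-1) + m / (n-1) := by
    rw [h1, Nat.add_mul_div_right _ _ hn1]
  have hnR : (0:ℝ) < (n:ℝ) := by positivity
  rcases lt_or_ge (m % (n-1) + 1) (n-1) with hc | hc
  · have e1 : (m + 1) % (n-1) = m % (n-1) + 1 := by
      rw [hmod, Nat.mod_eq_of_lt hc]
    have e2 : (m + 1) / (n-1) = m / (n-1) := by
      rw [hdiv, Nat.div_eq_of_lt hc, Nat.zero_add]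
    unfold varsigma
    rw [e1, e2]
    gcongr
    push_cast
    linarith
  · have hc' : m % (n-1) + 1 = n - 1 := by omega
    have e1 : (m + 1) % (n-1) = 0 := by
      rw [hmod, hc', Nat.mod_self]
    have e2 : (m + 1) / (n-1) = m / (n-1) + 1 := by
      rw [hdiv, hc', Nat.div_self hn1]; omega
    unfold varsigma
    rw [e1, e2]
    have hs2 : ((m % (n-1) : ℕ) : ℝ) = (n:ℝ) - 2 := by
      have : m % (n-1) + 2 = n := by omega
      have := congrArg (fun x : ℕ => (x : ℝ)) this
      push_cast at this
      linarith
    rw [hs2]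
    have hp1 : (0:ℝ) < (n:ℝ) ^ (m / (n-1) + 1) := by positivity
    have hp2 : (0:ℝ) < (n:ℝ) ^ (m / (n-1) + 1 + 1) := by positivity
    rw [div_le_div_iff₀ hp2 hp1, Nat.cast_zero]
    have hexp : (n:ℝ) ^ (m / (n-1) + 1 + 1) = (n:ℝ) ^ (m / (n-1) + 1) * n := by ring
    rw [hexp]
    nlinarith [hp1]

lemma varsigma_anti (n : ℕ) (hn : 2 ≤ n) (M m : ℕ) (h : M ≤ m) :
    varsigma n m ≤ varsigma n M := by
  induction m, h using Nat.le_induction with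
  | base => exact le_refl _
  | succ m hm ih => exact (varsigma_succ_le n hn m).trans ih

open Finset in
lemma core (n : ℕ) (hn : 2 ≤ n) (F : Finset ℕ) (r ν : ℕ → ℕ)
    (h : ∑ j ∈ F, (r j : ℝ) / (n : ℝ) ^ ν j < 1) :
    ∑ j ∈ F, (r j : ℝ) / (n : ℝ) ^ ν j ≤ 1 - varsigma n (∑ j ∈ F, r j) := by
  have hn1 : 0 < n - 1 := by omega
  have hnR : (0:ℝ) < (n:ℝ) := by positivity
  obtain ⟨N, hνN⟩ : ∃ N, ∀ j ∈ F, ν j ≤ N := ⟨F.sup ν, fun j hj => Finset.le_sup hj⟩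
  set M := ∑ j ∈ F, r j with hM
  set S := ∑ j ∈ F, (r j : ℝ) / (n : ℝ) ^ ν j with hSdef
  set A := ∑ j ∈ F, r j * n ^ (N - ν j) with hA
  have hNpos : (0:ℝ) < (n:ℝ) ^ N := by positivity
  have hAS : (A : ℝ) = S * (n:ℝ) ^ N := by
    rw [hA, hSdef]
    push_cast
    rw [Finset.sum_mul]
    refine Finset.sum_congr rfl fun j hj => ?_
    have hj' : ν j ≤ N := hνN j hj
    have hpow : (n:ℝ) ^ N = (n:ℝ) ^ (ν j) * (n:ℝ) ^ (N - ν j) := by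
      rw [← pow_add]; congr 1; omega
    have hne : (n:ℝ) ^ (ν j) ≠ 0 := by positivity
    rw [div_mul_eq_mul_div, hpow, eq_div_iff hne]
    ring
  have hAlt : A < n ^ N := by
    have h1 : (A:ℝ) < (n:ℝ)^N := by
      rw [hAS]
      calc S * (n:ℝ)^N < 1 * (n:ℝ)^N := mul_lt_mul_of_pos_right h hNpos
        _ = (n:ℝ)^N := one_mul _
    exact_mod_cast h1
  have hds : dsum n A ≤ M := dsum_sum_le n hn F r (fun j => N - ν j)
  have hS : S = (A:ℝ) / (n:ℝ)^N := by rw [hAS]; field_simp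
  clear_value A S M
  clear hM hSdef hA
  have hsn : M % (n-1) < n - 1 := Nat.mod_lt _ hn1
  have hMdm : (n-1) * (M / (n-1)) + M % (n-1) = M := Nat.div_add_mod M (n-1)
  rcases le_or_gt N (M / (n-1)) with hNk | hkN
  · -- easy case: N ≤ k
    have hpow1 : (1:ℕ) ≤ n ^ N := Nat.one_le_pow _ _ (by omega)
    have hA1 : (A:ℝ) ≤ (n:ℝ)^N - 1 := by
      have : (A:ℝ) ≤ ((n ^ N - 1 : ℕ) : ℝ) := by exact_mod_cast (by omega : A ≤ n ^ N - 1)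
      rwa [Nat.cast_sub hpow1, Nat.cast_pow, Nat.cast_one] at this
    have hS1 : S ≤ 1 - 1 / (n:ℝ)^N := by
      rw [hS]
      rw [div_le_iff₀ hNpos, sub_mul, one_mul, div_mul_cancel₀ _ (ne_of_gt hNpos)]
      linarith
    have hvs : varsigma n M ≤ 1 / (n:ℝ)^N := by
      unfold varsigma
      have h2 : ((n:ℝ) - (M % (n-1) : ℕ)) ≤ (n:ℝ) := by
        have : (0:ℝ) ≤ ((M % (n-1) : ℕ) : ℝ) := Nat.cast_nonneg _
        linarith
      have h3 : (0:ℝ) < (n:ℝ) ^ (M / (n-1) + 1) := by positivity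
      calc ((n:ℝ) - (M % (n-1) : ℕ)) / (n:ℝ) ^ (M / (n-1) + 1)
          ≤ (n:ℝ) / (n:ℝ) ^ (M / (n-1) + 1) := by gcongr
        _ = 1 / (n:ℝ) ^ (M / (n-1)) := by
            rw [pow_succ]
            field_simp
        _ ≤ 1 / (n:ℝ)^N := by
            have hn1R : (1:ℝ) ≤ (n:ℝ) := by exact_mod_cast (by omega : 1 ≤ n)
            have h4 : (n:ℝ)^N ≤ (n:ℝ)^(M/(n-1)) := pow_le_pow_right₀ hn1R hNk
            exact one_div_le_one_div_of_le hNpos h4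
    linarith
  · -- hard case: k < N
    have key : A + (n - M % (n-1)) * n ^ (N - M/(n-1) - 1) ≤ n ^ N := by
      by_contra hc
      push_neg at hc
      have := dsum_ge n hn M N A (by omega) hc hAlt
      omega
    have hsle : M % (n-1) ≤ n := by omega
    have hcast : ((n - M % (n-1) : ℕ) : ℝ) = (n:ℝ) - (M % (n-1) : ℕ) := by
      exact Nat.cast_sub hsle
    have keyR : (A:ℝ) ≤ (n:ℝ)^N - ((n:ℝ) - (M % (n-1) : ℕ)) * (n:ℝ) ^ (N - M/(n-1) - 1) := by
      have h1 : (A:ℝ) + ((n - M % (n-1) : ℕ) : ℝ) * (n:ℝ) ^ (N - M/(n-1) - 1) ≤ (n:ℝ)^N := by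
        exact_mod_cast key
      rw [hcast] at h1
      linarith
    have hsplit : (n:ℝ)^N = (n:ℝ)^(M/(n-1) + 1) * (n:ℝ)^(N - M/(n-1) - 1) := by
      rw [← pow_add]; congr 1; omega
    have hEq : 1 - varsigma n M
        = ((n:ℝ)^N - ((n:ℝ) - (M % (n-1) : ℕ)) * (n:ℝ) ^ (N - M/(n-1) - 1)) / (n:ℝ)^N := by
      unfold varsigma
      rw [hsplit]
      have hp1 : (n:ℝ)^(M/(n-1) + 1) ≠ 0 := by positivity
      have hp2 : (n:ℝ)^(N - M/(n-1) - 1) ≠ 0 := by positivity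
      field_simp
    rw [hS, hEq]
    gcongr

/-- Corollary 4: if `(r 1,…,r t)` and `(ν 1,…,ν t)` are sequences of positive integers
with `Σ_j r j = m` and the `ν j` pairwise distinct, and for some `1 ≤ i ≤ t` the sum
`Σ_{j=1}^i r j / n^{ν j}` is `< 1`, then this sum is `≤ 1 - ς_{n,m}`. -/
theorem stmt14 (n m t : ℕ) (hn : 2 ≤ n) (hm : 1 ≤ m) (r ν : ℕ → ℕ)
    (hr : ∀ j, 1 ≤ j → j ≤ t → 1 ≤ r j)
    (hνpos : ∀ j, 1 ≤ j → j ≤ t → 1 ≤ ν j)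
    (hν : ∀ j j', 1 ≤ j → j ≤ t → 1 ≤ j' → j' ≤ t → j ≠ j' → ν j ≠ ν j')
    (hsum : ∑ j ∈ Finset.Icc 1 t, r j = m)
    (i : ℕ) (hi1 : 1 ≤ i) (hit : i ≤ t)
    (h : ∑ j ∈ Finset.Icc 1 i, (r j : ℝ) / (n : ℝ) ^ ν j < 1) :
    ∑ j ∈ Finset.Icc 1 i, (r j : ℝ) / (n : ℝ) ^ ν j ≤ 1 - varsigma n m := by
  have key := core n hn (Finset.Icc 1 i) r ν h
  have hMm : (∑ j ∈ Finset.Icc 1 i, r j) ≤ m := by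
    rw [← hsum]
    exact Finset.sum_le_sum_of_subset (Finset.Icc_subset_Icc_right hit)
  have hmono := varsigma_anti n hn _ m hMm
  linarith
end

section
/- For all integers n ≥ 2 and r ≥ 1, the limit as a → ∞ of Σ_{i=1}^{r} Σ_{k=1}^{a−1} [binom(n^{a−k} − n^{a−k−1}, i) · binom(n^a − n^{a−1} − i·n^k, r−i)] / binom(n^a − n^{a−1}, r) equals Σ_{i=1}^{r} binom(r, i)/(n^i − 1) (that is, η_{n,r+1} − 1, where η_{n,m} := 1 + Σ_{i=1}^{m−1} binom(m−1, i)/(n^i − 1)). -/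
open Finset Filter Topology

private lemma auxA (m c : ℕ) (hc : 1 ≤ c) : ∀ i : ℕ,
    m.descFactorial i * c ^ i ≤ (m * c).descFactorial i := by
  intro i
  induction i with
  | zero => simp
  | succ i ih =>
    rw [Nat.descFactorial_succ, Nat.descFactorial_succ, pow_succ]
    have h1 : (m - i) * c ≤ m * c - i := by
      have : i ≤ i * c := Nat.le_mul_of_pos_right i hc
      have := Nat.sub_mul m i c
      omega
    calc (m - i) * m.descFactorial i * (c ^ i * c)
        = ((m - i) * c) * (m.descFactorial i * c ^ i) := by ring
      _ ≤ (m * c - i) * (m * c).descFactorial i := Nat.mul_le_mul h1 ih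

private lemma auxB (m c i : ℕ) (hc : 1 ≤ c) :
    m.choose i * c ^ i ≤ (m * c).choose i := by
  have h := auxA m c hc i
  rw [Nat.descFactorial_eq_factorial_mul_choose, Nat.descFactorial_eq_factorial_mul_choose,
    mul_assoc] at h
  exact Nat.le_of_mul_le_mul_left h (Nat.factorial_pos i)

private lemma auxC (m c r i s : ℕ) (hir : i ≤ r) (hc : 1 ≤ c) (hs : i ≤ s)
    (hrm : r ≤ m * c) :
    m.choose i * (m * c - s).choose (r - i) * c ^ i ≤ r.choose i * (m * c).choose r := by
  calc m.choose i * (m * c - s).choose (r - i) * c ^ i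
      = (m.choose i * c ^ i) * (m * c - s).choose (r - i) := by ring
    _ ≤ (m * c).choose i * (m * c - i).choose (r - i) :=
        Nat.mul_le_mul (auxB m c i hc)
          (Nat.choose_le_choose _ (Nat.sub_le_sub_left hs _))
    _ = (m * c).choose r * r.choose i := (Nat.choose_mul (n := m * c) hir).symm
    _ = r.choose i * (m * c).choose r := mul_comm _ _

private lemma auxD (m M r i : ℕ) (hir : i ≤ r) (N : ℕ) :
    m.choose i * N.choose (r - i) * M.descFactorial r
      = r.choose i * (m.descFactorial i * N.descFactorial (r - i)) * M.choose r := by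
  rw [Nat.descFactorial_eq_factorial_mul_choose, Nat.descFactorial_eq_factorial_mul_choose,
    Nat.descFactorial_eq_factorial_mul_choose,
    ← Nat.choose_mul_factorial_mul_factorial hir]
  ring

private lemma auxE (N j : ℕ) (h : j ≤ N) :
    ((N.descFactorial j : ℕ) : ℝ) = ∏ l ∈ Finset.range j, ((N : ℝ) - l) := by
  rw [Nat.descFactorial_eq_prod_range, Nat.cast_prod]
  refine Finset.prod_congr rfl fun l hl => ?_
  have : l ≤ N := le_trans (Finset.mem_range.1 hl).le h
  push_cast [Nat.cast_sub this]
  ring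

private lemma auxDiv (c b1 b2 : ℝ) (hc : 0 < c) (f : ℕ → ℝ) (hf : Tendsto f atTop atTop) :
    Tendsto (fun a => (f a - b1) / (c * f a - b2)) atTop (𝓝 (1 / c)) := by
  have h0 : Tendsto (fun a => (1 - b1 / f a) / (c - b2 / f a)) atTop
      (𝓝 ((1 - 0) / (c - 0))) := by
    refine Tendsto.div (tendsto_const_nhds.sub (Tendsto.div_atTop tendsto_const_nhds hf))
      (tendsto_const_nhds.sub (Tendsto.div_atTop tendsto_const_nhds hf)) ?_
    simpa using hc.ne'
  rw [sub_zero, sub_zero] at h0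
  refine Tendsto.congr' ?_ h0
  filter_upwards [hf.eventually_gt_atTop 0] with a ha
  have hfa : f a ≠ 0 := ha.ne'
  have e1 : 1 - b1 / f a = (f a - b1) / f a := by field_simp
  have e2 : c - b2 / f a = (c * f a - b2) / f a := by field_simp
  rw [e1, e2, div_div_div_cancel_right₀]
  exact hfa

private lemma auxMul (n a k : ℕ) (hak : k + 1 ≤ a) :
    (n ^ (a - k) - n ^ (a - k - 1)) * n ^ k = n ^ a - n ^ (a - 1) := by
  rw [Nat.sub_mul, ← pow_add, ← pow_add]
  have e1 : a - k + k = a := by omega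
  have e2 : a - k - 1 + k = a - 1 := by omega
  rw [e1, e2]

private lemma auxMT (n k : ℕ) (hn : 2 ≤ n) :
    Tendsto (fun a : ℕ => n ^ (a - k) - n ^ (a - k - 1)) atTop atTop := by
  apply tendsto_atTop_mono _ (tendsto_sub_atTop_nat (k + 1))
  intro a
  rcases le_or_gt a k with h | h
  · have h0 : a - (k + 1) = 0 := by omega
    simp [h0]
  · have h1 : a - k - 1 < 2 ^ (a - k - 1) := Nat.lt_two_pow_self
    have h2 : n ^ (a - k) = n ^ (a - k - 1) * n := by
      rw [← pow_succ]; congr 1; omega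
    have h3 : 2 ^ (a - k - 1) ≤ n ^ (a - k - 1) := Nat.pow_le_pow_left hn _
    have h4 : n ^ (a - k - 1) * 2 ≤ n ^ (a - k - 1) * n := Nat.mul_le_mul_left _ hn
    have h5 : n ^ (a - k - 1) * 2 ≤ n ^ (a - k) := h2 ▸ h4
    omega

private lemma auxEq (r i m M s : ℕ) (hir : i ≤ r) (hm : i ≤ m) (hM : r + s ≤ M) :
    ((m.choose i * (M - s).choose (r - i) : ℕ) : ℝ) / ((M.choose r : ℕ) : ℝ)
      = (r.choose i : ℝ)
        * (∏ l ∈ Finset.range i, ((m : ℝ) - l) / ((M : ℝ) - l))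
        * (∏ l ∈ Finset.range (r - i), ((M : ℝ) - s - l) / ((M : ℝ) - i - l)) := by
  have hrM : r ≤ M := le_trans (Nat.le_add_right r s) hM
  have hsM : s ≤ M := by omega
  have hM' : r - i ≤ M - s := by omega
  have hCpos : (0 : ℝ) < (M.choose r : ℝ) := by exact_mod_cast Nat.choose_pos hrM
  have hsplit : (∏ l ∈ Finset.range r, ((M : ℝ) - l))
      = (∏ l ∈ Finset.range i, ((M : ℝ) - l))
        * (∏ l ∈ Finset.range (r - i), ((M : ℝ) - i - l)) := by
    have h := Finset.prod_range_add (fun l => (M : ℝ) - l) i (r - i)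
    rw [Nat.add_sub_cancel' hir] at h
    rw [h]
    exact congrArg _ (Finset.prod_congr rfl fun l _ => by push_cast; try ring)
  have h1 : ((m.descFactorial i : ℕ) : ℝ) = ∏ l ∈ Finset.range i, ((m : ℝ) - l) := auxE m i hm
  have h2 : (((M - s).descFactorial (r - i) : ℕ) : ℝ)
      = ∏ l ∈ Finset.range (r - i), ((M : ℝ) - s - l) := by
    rw [auxE (M - s) (r - i) hM']
    exact Finset.prod_congr rfl fun l _ => by rw [Nat.cast_sub hsM]; try ring
  have h3 : ((M.descFactorial r : ℕ) : ℝ) = ∏ l ∈ Finset.range r, ((M : ℝ) - l) := auxE M r hrM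
  have hid : (m.choose i : ℝ) * ((M - s).choose (r - i) : ℝ) * ((M.descFactorial r : ℕ) : ℝ)
      = (r.choose i : ℝ) * (((m.descFactorial i : ℕ) : ℝ)
          * (((M - s).descFactorial (r - i) : ℕ) : ℝ)) * ((M.choose r : ℕ) : ℝ) := by
    exact_mod_cast congrArg (Nat.cast (R := ℝ)) (auxD m M r i hir (M - s))
  have hp1 : (0 : ℝ) < ∏ l ∈ Finset.range i, ((M : ℝ) - l) := by
    refine Finset.prod_pos fun l hl => ?_
    have hlr : l < M := lt_of_lt_of_le (Finset.mem_range.1 hl) (le_trans hir hrM)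
    have : (l : ℝ) < (M : ℝ) := by exact_mod_cast hlr
    linarith
  have hp2 : (0 : ℝ) < ∏ l ∈ Finset.range (r - i), ((M : ℝ) - i - l) := by
    refine Finset.prod_pos fun l hl => ?_
    have hlr : i + l < M := by
      have := Finset.mem_range.1 hl; omega
    have : ((i : ℝ) + l) < (M : ℝ) := by exact_mod_cast hlr
    linarith
  rw [Finset.prod_div_distrib, Finset.prod_div_distrib]
  have hcomb : (r.choose i : ℝ)
        * ((∏ l ∈ Finset.range i, ((m : ℝ) - l)) / (∏ l ∈ Finset.range i, ((M : ℝ) - l)))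
        * ((∏ l ∈ Finset.range (r - i), ((M : ℝ) - s - l))
            / (∏ l ∈ Finset.range (r - i), ((M : ℝ) - i - l)))
      = ((r.choose i : ℝ) * ((∏ l ∈ Finset.range i, ((m : ℝ) - l))
          * (∏ l ∈ Finset.range (r - i), ((M : ℝ) - s - l))))
        / ((∏ l ∈ Finset.range i, ((M : ℝ) - l))
          * (∏ l ∈ Finset.range (r - i), ((M : ℝ) - i - l))) := by
    field_simp
  rw [hcomb, div_eq_div_iff hCpos.ne' (by positivity)]
  push_cast
  rw [← h1, ← h2, ← hsplit, ← h3]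
  push_cast at hid
  linear_combination hid

private lemma auxBound (r i m c : ℕ) (hir : i ≤ r) (hc : 1 ≤ c) :
    ((m.choose i * (m * c - i * c).choose (r - i) : ℕ) : ℝ) / (((m * c).choose r : ℕ) : ℝ)
      ≤ (r.choose i : ℝ) * (1 / (c : ℝ)) ^ i := by
  have hp : (0 : ℝ) < (c : ℝ) ^ i := by positivity
  by_cases hMr : r ≤ m * c
  · have hC : (0 : ℝ) < ((m * c).choose r : ℝ) := by exact_mod_cast Nat.choose_pos hMr
    have hnat := auxC m c r i (i * c) hir hc (Nat.le_mul_of_pos_right i (by omega)) hMr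
    have hreal : ((m.choose i * (m * c - i * c).choose (r - i) : ℕ) : ℝ) * (c : ℝ) ^ i
        ≤ (r.choose i : ℝ) * (((m * c).choose r : ℕ) : ℝ) := by exact_mod_cast hnat
    rw [div_le_iff₀ hC, div_pow, one_pow]
    have he : (r.choose i : ℝ) * (1 / (c : ℝ) ^ i) * (((m * c).choose r : ℕ) : ℝ)
        = ((r.choose i : ℝ) * (((m * c).choose r : ℕ) : ℝ)) / (c : ℝ) ^ i := by ring
    rw [he, le_div_iff₀ hp]
    exact hreal
  · push_neg at hMr
    rw [Nat.choose_eq_zero_of_lt hMr]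
    norm_num
    positivity

private noncomputable def Tt (n r i a k : ℕ) : ℝ :=
  (((n ^ (a - k) - n ^ (a - k - 1)).choose i *
      (n ^ a - n ^ (a - 1) - i * n ^ k).choose (r - i) : ℕ) : ℝ) /
    (((n ^ a - n ^ (a - 1)).choose r : ℕ) : ℝ)

private noncomputable def ff (n r i a k : ℕ) : ℝ :=
  if k ∈ Finset.Icc 1 (a - 1) then Tt n r i a k else 0

private noncomputable def gg (n r i k : ℕ) : ℝ :=
  if 1 ≤ k then (r.choose i : ℝ) * (1 / (n : ℝ) ^ i) ^ k else 0

private lemma auxI (n r i : ℕ) (hn : 2 ≤ n) (hi1 : 1 ≤ i) (hir : i ≤ r) :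
    Tendsto (fun a : ℕ => ∑ k ∈ Finset.Icc 1 (a - 1), Tt n r i a k)
      atTop (𝓝 ((r.choose i : ℝ) / ((n : ℝ) ^ i - 1))) := by
  have hn1 : (1 : ℝ) < (n : ℝ) := by exact_mod_cast hn
  have hy : (1 : ℝ) < (n : ℝ) ^ i := one_lt_pow₀ hn1 (by omega)
  have hx0 : (0 : ℝ) ≤ 1 / (n : ℝ) ^ i := by positivity
  have hx1 : 1 / (n : ℝ) ^ i < 1 := by
    rw [div_lt_one (by linarith)]; linarith
  -- summability of the dominating function
  have hgsum : Summable (gg n r i) := by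
    refine Summable.of_nonneg_of_le (fun k => ?_) (fun k => ?_)
      ((summable_geometric_of_lt_one hx0 hx1).mul_left (r.choose i : ℝ))
    · rw [gg]; split <;> positivity
    · rw [gg]; split
      · exact le_refl _
      · positivity
  -- nonnegativity
  have hT0 : ∀ a k, 0 ≤ Tt n r i a k := fun a k => by rw [Tt]; positivity
  -- the bound
  have hTB : ∀ a k, k ∈ Finset.Icc 1 (a - 1) →
      Tt n r i a k ≤ (r.choose i : ℝ) * (1 / (n : ℝ) ^ i) ^ k := by
    intro a k hk
    obtain ⟨hk1, hk2⟩ := Finset.mem_Icc.1 hk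
    have hka : k + 1 ≤ a := by omega
    have hnk : 1 ≤ n ^ k := Nat.one_le_pow _ _ (by omega)
    have hMul := auxMul n a k hka
    have hb := auxBound r i (n ^ (a - k) - n ^ (a - k - 1)) (n ^ k) hir hnk
    rw [hMul] at hb
    have hxe : ((1 : ℝ) / ((n ^ k : ℕ) : ℝ)) ^ i = (1 / (n : ℝ) ^ i) ^ k := by
      push_cast
      rw [div_pow, div_pow, one_pow, one_pow, ← pow_mul, ← pow_mul, mul_comm]
    rw [hxe] at hb
    exact hb
  -- pointwise limits
  have hab : ∀ k, Tendsto (fun a => ff n r i a k) atTop (𝓝 (gg n r i k)) := by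
    intro k
    rcases Nat.eq_zero_or_pos k with rfl | hk1
    · have h1 : ∀ a, ff n r i a 0 = 0 := fun a => by rw [ff]; simp
      have h2 : gg n r i 0 = 0 := by rw [gg]; simp
      rw [h2]
      simpa [h1] using (tendsto_const_nhds : Tendsto (fun _ : ℕ => (0 : ℝ)) atTop (𝓝 0))
    · have hgk : gg n r i k = (r.choose i : ℝ) * (1 / (n : ℝ) ^ i) ^ k := by
        rw [gg, if_pos (by omega : 1 ≤ k)]
      rw [hgk]
      have hmt := auxMT n k hn
      have hmtR : Tendsto (fun a => ((n ^ (a - k) - n ^ (a - k - 1) : ℕ) : ℝ)) atTop atTop :=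
        tendsto_natCast_atTop_atTop.comp hmt
      have hMt : Tendsto (fun a => ((n ^ a - n ^ (a - 1) : ℕ) : ℝ)) atTop atTop := by
        have h0 := (tendsto_natCast_atTop_atTop (R := ℝ)).comp (auxMT n 0 hn)
        simpa [Function.comp_def] using h0
      have hP1 : Tendsto (fun a => ∏ l ∈ Finset.range i,
          (((n ^ (a - k) - n ^ (a - k - 1) : ℕ) : ℝ) - l) /
            (((n ^ a - n ^ (a - 1) : ℕ) : ℝ) - l))
          atTop (𝓝 (∏ _l ∈ Finset.range i, 1 / (n : ℝ) ^ k)) := by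
        refine tendsto_finset_prod _ fun l _ => ?_
        have h := auxDiv ((n : ℝ) ^ k) l l (by positivity) _ hmtR
        refine Tendsto.congr' ?_ h
        filter_upwards [eventually_ge_atTop (k + 1)] with a hka
        have hMul := auxMul n a k hka
        have he : ((n ^ a - n ^ (a - 1) : ℕ) : ℝ)
            = (n : ℝ) ^ k * ((n ^ (a - k) - n ^ (a - k - 1) : ℕ) : ℝ) := by
          rw [← hMul]; push_cast; ring
        rw [he]
      have hP2 : Tendsto (fun a => ∏ l ∈ Finset.range (r - i),
          (((n ^ a - n ^ (a - 1) : ℕ) : ℝ) - ((i * n ^ k : ℕ) : ℝ) - l) /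
            (((n ^ a - n ^ (a - 1) : ℕ) : ℝ) - i - l))
          atTop (𝓝 (∏ _l ∈ Finset.range (r - i), (1 : ℝ))) := by
        refine tendsto_finset_prod _ fun l _ => ?_
        have h := auxDiv 1 (((i * n ^ k : ℕ) : ℝ) + l) ((i : ℝ) + l) one_pos _ hMt
        have h1 : (1 : ℝ) / 1 = 1 := by norm_num
        rw [h1] at h
        exact Tendsto.congr (fun a => by ring) h
      have hcomb := ((tendsto_const_nhds (x := (r.choose i : ℝ))
        (f := atTop (α := ℕ))).mul hP1).mul hP2
      have hval : (r.choose i : ℝ) * (∏ _l ∈ Finset.range i, 1 / (n : ℝ) ^ k)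
          * (∏ _l ∈ Finset.range (r - i), (1 : ℝ))
          = (r.choose i : ℝ) * (1 / (n : ℝ) ^ i) ^ k := by
        rw [Finset.prod_const, Finset.card_range, Finset.prod_const_one, mul_one]
        congr 1
        rw [div_pow, div_pow, one_pow, one_pow, ← pow_mul, ← pow_mul, mul_comm]
      rw [hval] at hcomb
      refine Tendsto.congr' ?_ hcomb
      filter_upwards [hmt.eventually_ge_atTop (r + i * n ^ k), eventually_ge_atTop (k + 1)]
        with a hma hka
      have hMul := auxMul n a k hka
      have hka1 : k ∈ Finset.Icc 1 (a - 1) := Finset.mem_Icc.2 ⟨hk1, by omega⟩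
      have hm_i : i ≤ n ^ (a - k) - n ^ (a - k - 1) :=
        le_trans (le_trans hir (Nat.le_add_right r _)) hma
      have hM : r + i * n ^ k ≤ n ^ a - n ^ (a - 1) := by
        calc r + i * n ^ k ≤ n ^ (a - k) - n ^ (a - k - 1) := hma
          _ ≤ (n ^ (a - k) - n ^ (a - k - 1)) * n ^ k :=
              Nat.le_mul_of_pos_right _ (by positivity)
          _ = n ^ a - n ^ (a - 1) := hMul
      rw [ff, if_pos hka1, Tt]
      exact (auxEq r i (n ^ (a - k) - n ^ (a - k - 1)) (n ^ a - n ^ (a - 1))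
        (i * n ^ k) hir hm_i hM).symm
  -- the uniform bound
  have hbd : ∀ a k, ‖ff n r i a k‖ ≤ gg n r i k := by
    intro a k
    rw [ff]
    split_ifs with h
    · have h1 : 1 ≤ k := (Finset.mem_Icc.1 h).1
      have hgk : gg n r i k = (r.choose i : ℝ) * (1 / (n : ℝ) ^ i) ^ k := by
        rw [gg, if_pos h1]
      rw [Real.norm_eq_abs, abs_of_nonneg (hT0 a k), hgk]
      exact hTB a k h
    · rw [norm_zero, gg]
      split <;> positivity
  have hdc := tendsto_tsum_of_dominated_convergence hgsum hab (Eventually.of_forall hbd)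
  have hfs : ∀ a, (∑' k, ff n r i a k) = ∑ k ∈ Finset.Icc 1 (a - 1), Tt n r i a k := by
    intro a
    rw [tsum_eq_sum (s := Finset.Icc 1 (a - 1)) (fun k hk => by rw [ff, if_neg hk])]
    exact Finset.sum_congr rfl fun k hk => by rw [ff, if_pos hk]
  have hgt : (∑' k, gg n r i k) = (r.choose i : ℝ) / ((n : ℝ) ^ i - 1) := by
    rw [hgsum.tsum_eq_zero_add]
    have h0 : gg n r i 0 = 0 := by rw [gg]; simp
    have hs : ∀ k : ℕ, gg n r i (k + 1)
        = ((r.choose i : ℝ) * (1 / (n : ℝ) ^ i)) * (1 / (n : ℝ) ^ i) ^ k := by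
      intro k; rw [gg, if_pos (by omega : 1 ≤ k + 1), pow_succ]; ring
    rw [h0, zero_add, tsum_congr hs, tsum_mul_left, tsum_geometric_of_lt_one hx0 hx1]
    have hne : (n : ℝ) ^ i - 1 ≠ 0 := by linarith
    have hne2 : (n : ℝ) ^ i ≠ 0 := by positivity
    field_simp
  rw [hgt] at hdc
  exact Tendsto.congr (fun a => hfs a) hdc

/-- Lemma 1: for `n ≥ 2`, `r ≥ 1`,
`lim_{a→∞} Σ_{i=1}^r Σ_{k=1}^{a-1} C(n^{a-k}-n^{a-k-1}, i)·C(n^a-n^{a-1}-i·n^k, r-i) / C(n^a-n^{a-1}, r)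
  = Σ_{i=1}^r C(r,i)/(n^i-1) = η_{n,r+1} - 1`. -/
theorem stmt15 (n r : ℕ) (hn : 2 ≤ n) (hr : 1 ≤ r) :
    Filter.Tendsto
      (fun a : ℕ =>
        ∑ i ∈ Finset.Icc 1 r, ∑ k ∈ Finset.Icc 1 (a - 1),
          (((n ^ (a - k) - n ^ (a - k - 1)).choose i *
              (n ^ a - n ^ (a - 1) - i * n ^ k).choose (r - i) : ℕ) : ℝ) /
            (((n ^ a - n ^ (a - 1)).choose r : ℕ) : ℝ))
      Filter.atTop (𝓝 (eta n (r + 1) - 1)) := by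
  have heq : eta n (r + 1) - 1
      = ∑ i ∈ Finset.Icc 1 r, ((r.choose i : ℝ) / ((n : ℝ) ^ i - 1)) := by
    simp [eta]
  rw [heq]
  refine tendsto_finset_sum _ fun i hi => ?_
  obtain ⟨h1, h2⟩ := Finset.mem_Icc.1 hi
  exact auxI n r i hn h1 h2
end

section
/- Let n ≥ 2, m ≥ 2, and let a ≥ 2 be an integer with n^a − n^{a−1} ≥ m − 1. Fix a letter x ∈ X, and integers 1 ≤ i ≤ m−1, 1 ≤ k ≤ a−1. Then the cardinality of K_{x,k,i} equals (m−1)! · binom(n^{a−k} − n^{a−k−1}, i) · binom(n^a − n^{a−1} − i·n^k, m−1−i). -/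
open Finset Filter Topology

/-- The set `K_{x,k,i}` of codes `(v 0, …, v (m-1))`: `v 0` is the one-letter word `x`,
the remaining code words are pairwise distinct, and there is a set `T` of `i` nonzero
indices such that each `v j` for `j ∈ T` has the form `x^k w` with `|w| = a-k` and `w`
not beginning with `x`, each `v j` for `j ∉ T`, `j ≠ 0` is a word of length `a` not
beginning with `x`, and no such `w` is a prefix of any such `v j'`. -/
def K (n : ℕ) (m : ℕ) [NeZero m] (a : ℕ) (x : Fin n) (k i : ℕ) :
    Set (Fin m → List (Fin n)) :=
  {v | v 0 = [x] ∧
    (∀ j j' : Fin m, j ≠ 0 → j' ≠ 0 → j ≠ j' → v j ≠ v j') ∧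
    ∃ T : Finset (Fin m), (0 : Fin m) ∉ T ∧ T.card = i ∧
      (∀ j ∈ T, (v j).length = a ∧ (v j).take k = List.replicate k x ∧
        ¬ [x] <+: (v j).drop k) ∧
      (∀ j : Fin m, j ≠ 0 → j ∉ T → (v j).length = a ∧ ¬ [x] <+: v j) ∧
      (∀ j ∈ T, ∀ j' : Fin m, j' ≠ 0 → j' ∉ T → ¬ (v j).drop k <+: v j')}

namespace S16


def words (n : ℕ) : ℕ → Finset (List (Fin n))
  | 0 => {[]}
  | (l+1) => (Finset.univ ×ˢ words n l).image fun p => p.1 :: p.2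

lemma mem_words {n l : ℕ} {w : List (Fin n)} : w ∈ words n l ↔ w.length = l := by
  induction l generalizing w with
  | zero => simp [words, List.length_eq_zero_iff]
  | succ l ih =>
    simp only [words, Finset.mem_image, Finset.mem_product, Finset.mem_univ, true_and,
      Prod.exists]
    constructor
    · rintro ⟨c, t, ht, rfl⟩; simp [ih.mp ht]
    · intro h
      cases w with
      | nil => simp at h
      | cons c t => exact ⟨c, t, ih.mpr (by simpa using h), rfl⟩

lemma card_words {n : ℕ} (l : ℕ) : (words n l).card = n ^ l := by
  induction l with
  | zero => simp [words]
  | succ l ih =>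
    rw [words, Finset.card_image_of_injective _ (by rintro ⟨a,b⟩ ⟨c,d⟩ h; simpa using h),
      Finset.card_product, Finset.card_univ, Fintype.card_fin, ih]
    ring

lemma singleton_prefix {α : Type*} {x : α} {w : List α} : [x] <+: w ↔ ∃ t, w = x :: t := by
  constructor
  · rintro ⟨t, rfl⟩; exact ⟨t, rfl⟩
  · rintro ⟨t, rfl⟩; exact ⟨t, rfl⟩

def B (n l : ℕ) (x : Fin n) : Finset (List (Fin n)) :=
  (words n l).filter (fun w => ¬ [x] <+: w)

lemma mem_B {n l : ℕ} {x : Fin n} {w : List (Fin n)} :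
    w ∈ B n l x ↔ w.length = l ∧ ¬ [x] <+: w := by
  simp [B, mem_words]

lemma card_B {n l : ℕ} (x : Fin n) (hl : 1 ≤ l) : (B n l x).card = n ^ l - n ^ (l - 1) := by
  have hB : B n l x = words n l \ (words n (l-1)).image (fun t => x :: t) := by
    ext w
    simp only [mem_B, Finset.mem_sdiff, mem_words, Finset.mem_image, singleton_prefix]
    constructor
    · rintro ⟨hw, hx⟩
      exact ⟨hw, by rintro ⟨t, ht, rfl⟩; exact hx ⟨t, rfl⟩⟩
    · rintro ⟨hw, hx⟩
      refine ⟨hw, ?_⟩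
      rintro ⟨t, rfl⟩
      simp only [List.length_cons] at hw
      exact hx ⟨t, by omega, rfl⟩
  rw [hB, Finset.card_sdiff_of_subset, card_words,
    Finset.card_image_of_injective _ (fun a b h => by simpa using h), card_words]
  · intro w hw
    simp only [Finset.mem_image, mem_words] at hw
    obtain ⟨t, ht, rfl⟩ := hw
    simp only [mem_words, List.length_cons]
    omega

def extF (n k : ℕ) (w : List (Fin n)) : Finset (List (Fin n)) :=
  (words n k).image (fun t => w ++ t)

lemma mem_extF {n k : ℕ} {w u : List (Fin n)} :
    u ∈ extF n k w ↔ ∃ t, t.length = k ∧ u = w ++ t := by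
  simp only [extF, Finset.mem_image, mem_words]
  exact ⟨fun ⟨t, h, e⟩ => ⟨t, h, e.symm⟩, fun ⟨t, h, e⟩ => ⟨t, h, e.symm⟩⟩

lemma card_extF {n : ℕ} (k : ℕ) (w : List (Fin n)) : (extF n k w).card = n ^ k := by
  rw [extF, Finset.card_image_of_injective _ (fun a b h => by simpa using h), card_words]

lemma not_prefix_append {α : Type*} {x : α} {w t : List α} (hw : ¬ [x] <+: w) (hne : w ≠ []) :
    ¬ [x] <+: (w ++ t) := by
  cases w with
  | nil => exact absurd rfl hne
  | cons c w' =>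
    intro h
    obtain ⟨s, hs⟩ := singleton_prefix.mp h
    simp only [List.cons_append, List.cons.injEq] at hs
    exact hw (singleton_prefix.mpr ⟨w', by rw [hs.1]⟩)

def avoidF (n a k : ℕ) (x : Fin n) (W : Finset (List (Fin n))) : Finset (List (Fin n)) :=
  B n a x \ W.biUnion (extF n k)

lemma biUnion_subset_B {n a k : ℕ} {x : Fin n} {W : Finset (List (Fin n))}
    (hW : W ⊆ B n (a - k) x) (hka : k ≤ a - 1) (ha : 1 ≤ a) :
    W.biUnion (extF n k) ⊆ B n a x := by
  intro u hu
  simp only [Finset.mem_biUnion] at hu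
  obtain ⟨w, hwW, hu⟩ := hu
  obtain ⟨t, ht, rfl⟩ := mem_extF.mp hu
  obtain ⟨hwl, hwx⟩ := mem_B.mp (hW hwW)
  refine mem_B.mpr ⟨by simp [hwl, ht]; omega, ?_⟩
  exact not_prefix_append hwx (by intro h; rw [h] at hwl; simp at hwl; omega)

lemma card_avoidF {n a k i : ℕ} {x : Fin n} {W : Finset (List (Fin n))}
    (hW : W ⊆ B n (a - k) x) (hWc : W.card = i) (hka : k ≤ a - 1) (ha : 1 ≤ a) :
    (avoidF n a k x W).card = n ^ a - n ^ (a - 1) - i * n ^ k := by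
  have hdisj : ∀ w₁ ∈ W, ∀ w₂ ∈ W, w₁ ≠ w₂ → Disjoint (extF n k w₁) (extF n k w₂) := by
    intro w₁ h₁ w₂ h₂ hne
    rw [Finset.disjoint_left]
    intro u hu₁ hu₂
    obtain ⟨t₁, ht₁, rfl⟩ := mem_extF.mp hu₁
    obtain ⟨t₂, ht₂, he⟩ := mem_extF.mp hu₂
    have hl : w₁.length = w₂.length := by
      rw [(mem_B.mp (hW h₁)).1, (mem_B.mp (hW h₂)).1]
    exact hne (List.append_inj he hl).1
  have hcb : (W.biUnion (extF n k)).card = i * n ^ k := by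
    rw [Finset.card_biUnion hdisj]
    simp [card_extF, hWc, mul_comm]
  rw [avoidF, Finset.card_sdiff_of_subset (biUnion_subset_B hW hka ha), hcb, card_B x ha]

def PF (n m a k i : ℕ) (x : Fin n) :
    Finset ((_ : Finset (List (Fin n))) × Finset (List (Fin n))) :=
  ((B n (a - k) x).powersetCard i).sigma
    (fun W => (avoidF n a k x W).powersetCard (m - 1 - i))

lemma card_PF {n m a k i : ℕ} (x : Fin n) (hka : k ≤ a - 1) (ha : 1 ≤ a) :
    (PF n m a k i x).card =
      (n ^ (a - k) - n ^ (a - k - 1)).choose i *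
        (n ^ a - n ^ (a - 1) - i * n ^ k).choose (m - 1 - i) := by
  rw [PF, Finset.card_sigma]
  have : ∀ W ∈ (B n (a - k) x).powersetCard i,
      ((avoidF n a k x W).powersetCard (m - 1 - i)).card =
        (n ^ a - n ^ (a - 1) - i * n ^ k).choose (m - 1 - i) := by
    intro W hW
    rw [Finset.mem_powersetCard] at hW
    rw [Finset.card_powersetCard, card_avoidF hW.1 hW.2 hka ha]
  rw [Finset.sum_congr rfl this, Finset.sum_const, Finset.card_powersetCard,
    card_B x (by omega), smul_eq_mul]

def theta (n k : ℕ) (x : Fin n)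
    (p : (_ : Finset (List (Fin n))) × Finset (List (Fin n))) : Finset (List (Fin n)) :=
  p.1.image (fun w => List.replicate k x ++ w) ∪ p.2

lemma prefix_replicate_append {n k : ℕ} {x : Fin n} (hk : 1 ≤ k) (w : List (Fin n)) :
    [x] <+: List.replicate k x ++ w := by
  obtain ⟨k, rfl⟩ : ∃ k', k = k' + 1 := ⟨k - 1, by omega⟩
  exact ⟨List.replicate k x ++ w, by simp [List.replicate_succ]⟩

lemma theta_filter {n m a k i : ℕ} {x : Fin n} {p}
    (hp : p ∈ PF n m a k i x) (hk : 1 ≤ k) :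
    (theta n k x p).filter (fun u => [x] <+: u) =
        p.1.image (fun w => List.replicate k x ++ w) ∧
      (theta n k x p).filter (fun u => ¬ [x] <+: u) = p.2 := by
  rw [PF, Finset.mem_sigma, Finset.mem_powersetCard, Finset.mem_powersetCard] at hp
  have hU : ∀ u ∈ p.2, ¬ [x] <+: u := by
    intro u hu
    have := hp.2.1 hu
    rw [avoidF, Finset.mem_sdiff, mem_B] at this
    exact this.1.2
  constructor
  · ext u
    simp only [Finset.mem_filter, theta, Finset.mem_union, Finset.mem_image]
    constructor
    · rintro ⟨h | h, hx⟩
      · exact h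
      · exact absurd hx (hU u h)
    · rintro ⟨w, hw, rfl⟩
      exact ⟨Or.inl ⟨w, hw, rfl⟩, prefix_replicate_append hk w⟩
  · ext u
    simp only [Finset.mem_filter, theta, Finset.mem_union, Finset.mem_image]
    constructor
    · rintro ⟨h | h, hx⟩
      · obtain ⟨w, hw, rfl⟩ := h
        exact absurd (prefix_replicate_append hk w) hx
      · exact h
    · intro h
      exact ⟨Or.inr h, hU u h⟩

lemma theta_injOn {n m a k i : ℕ} {x : Fin n} (hk : 1 ≤ k) :
    Set.InjOn (theta n k x) (PF n m a k i x) := by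
  intro p hp q hq h
  have hfp := theta_filter hp hk
  have hfq := theta_filter hq hk
  have h1 : p.1.image (fun w => List.replicate k x ++ w) =
      q.1.image (fun w => List.replicate k x ++ w) := by
    rw [← hfp.1, ← hfq.1, h]
  have h2 : p.2 = q.2 := by rw [← hfp.2, ← hfq.2, h]
  have h1' : p.1 = q.1 :=
    Finset.image_injective (fun a b hab => List.append_cancel_left hab) h1
  exact Sigma.ext h1' (by rw [h2])

def GF (n m a k i : ℕ) (x : Fin n) : Finset (Finset (List (Fin n))) :=
  (PF n m a k i x).image (theta n k x)

lemma card_GF {n m a k i : ℕ} (x : Fin n) (hk : 1 ≤ k) (hka : k ≤ a - 1) (ha : 1 ≤ a) :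
    (GF n m a k i x).card =
      (n ^ (a - k) - n ^ (a - k - 1)).choose i *
        (n ^ a - n ^ (a - 1) - i * n ^ k).choose (m - 1 - i) := by
  rw [GF, Finset.card_image_of_injOn (theta_injOn hk), card_PF x hka ha]

lemma card_theta {n m a k i : ℕ} {x : Fin n} {p}
    (hp : p ∈ PF n m a k i x) (hk : 1 ≤ k) (him : i ≤ m - 1) :
    (theta n k x p).card = m - 1 := by
  have hf := theta_filter hp hk
  rw [PF, Finset.mem_sigma, Finset.mem_powersetCard, Finset.mem_powersetCard] at hp
  have hd : Disjoint (p.1.image (fun w => List.replicate k x ++ w)) p.2 := by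
    rw [Finset.disjoint_left]
    intro u hu1 hu2
    rw [← hf.2] at hu2
    obtain ⟨w, hw, rfl⟩ := Finset.mem_image.mp hu1
    exact (Finset.mem_filter.mp hu2).2 (prefix_replicate_append hk w)
  rw [theta, Finset.card_union_of_disjoint hd,
    Finset.card_image_of_injective _ (fun a b hab => List.append_cancel_left hab),
    hp.1.2, hp.2.2]
  omega

def Psi (n m : ℕ) [NeZero m] (x : Fin n) (S : Finset (List (Fin n)))
    (e : {j : Fin m // j ≠ 0} ↪ {w // w ∈ S}) : Fin m → List (Fin n) :=
  fun j => if h : j = 0 then [x] else (e ⟨j, h⟩ : List (Fin n))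

lemma Psi_injective {n m : ℕ} [NeZero m] (x : Fin n) (S : Finset (List (Fin n))) :
    Function.Injective (Psi n m x S) := by
  intro e e' h
  ext j
  have := congrFun h j.1
  simp only [Psi, dif_neg j.2] at this
  rw [this]

noncomputable def fiberF (n m : ℕ) [NeZero m] (x : Fin n) (S : Finset (List (Fin n))) :
    Finset (Fin m → List (Fin n)) :=
  (Finset.univ : Finset ({j : Fin m // j ≠ 0} ↪ {w // w ∈ S})).image (Psi n m x S)

lemma card_ne_zero' {m : ℕ} [NeZero m] : Fintype.card {j : Fin m // j ≠ 0} = m - 1 := by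
  rw [Fintype.card_subtype_compl, Fintype.card_subtype_eq, Fintype.card_fin]

lemma card_fiberF {n m : ℕ} [NeZero m] (x : Fin n) {S : Finset (List (Fin n))}
    (hS : S.card = m - 1) : (fiberF n m x S).card = (m - 1).factorial := by
  rw [fiberF, Finset.card_image_of_injective _ (Psi_injective x S), Finset.card_univ,
    Fintype.card_embedding_eq, card_ne_zero', Fintype.card_coe, hS,
    Nat.descFactorial_self]

def keyF {n m : ℕ} [NeZero m] (v : Fin m → List (Fin n)) : Finset (List (Fin n)) :=
  (Finset.univ.erase 0).image v

lemma mem_fiberF_iff {n m : ℕ} [NeZero m] (x : Fin n) {S : Finset (List (Fin n))}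
    (hS : S.card = m - 1) {v : Fin m → List (Fin n)} :
    v ∈ fiberF n m x S ↔ v 0 = [x] ∧
      (∀ j j' : Fin m, j ≠ 0 → j' ≠ 0 → v j = v j' → j = j') ∧ keyF v = S := by
  constructor
  · intro hv
    obtain ⟨e, -, rfl⟩ := Finset.mem_image.mp hv
    refine ⟨by simp [Psi], ?_, ?_⟩
    · intro j j' hj hj' hvv
      simp only [Psi, dif_neg hj, dif_neg hj'] at hvv
      have := e.injective (Subtype.ext hvv)
      exact congrArg Subtype.val this
    · have hsub : keyF (Psi n m x S e) ⊆ S := by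
        intro u hu
        obtain ⟨j, hj, rfl⟩ := Finset.mem_image.mp hu
        have hj0 : j ≠ 0 := Finset.ne_of_mem_erase hj
        simp only [Psi, dif_neg hj0]
        exact (e ⟨j, hj0⟩).2
      refine Finset.eq_of_subset_of_card_le hsub ?_
      rw [hS, keyF, Finset.card_image_of_injOn, Finset.card_erase_of_mem (Finset.mem_univ _),
        Finset.card_univ, Fintype.card_fin]
      intro j hj j' hj' hvv
      have hj0 : j ≠ 0 := Finset.ne_of_mem_erase hj
      have hj0' : j' ≠ 0 := Finset.ne_of_mem_erase hj'
      simp only [Psi, dif_neg hj0, dif_neg hj0'] at hvv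
      exact congrArg Subtype.val (e.injective (Subtype.ext hvv))
  · rintro ⟨h0, hinj, hkey⟩
    refine Finset.mem_image.mpr ⟨⟨fun j => ⟨v j.1, ?_⟩, ?_⟩, Finset.mem_univ _, ?_⟩
    · rw [← hkey]
      exact Finset.mem_image_of_mem v (Finset.mem_erase.mpr ⟨j.2, Finset.mem_univ _⟩)
    · intro j j' hjj
      exact Subtype.ext (hinj j.1 j'.1 j.2 j'.2 (congrArg Subtype.val hjj))
    · funext j
      by_cases h : j = 0
      · simp [Psi, h, h0]
      · simp [Psi, h]; rfl

lemma K_iff (n m a : ℕ) [NeZero m] (x : Fin n) (k i : ℕ)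
    (hm : 2 ≤ m) (ha : 2 ≤ a) (him : i ≤ m - 1) (hk1 : 1 ≤ k) (hka : k ≤ a - 1)
    (v : Fin m → List (Fin n)) :
    v ∈ K n m a x k i ↔ ∃ S ∈ GF n m a k i x, v ∈ fiberF n m x S := by
  constructor
  · rintro ⟨h0, hdist, T, hT0, hTc, hTA, hTB, hTP⟩
    have hinj' : ∀ j j' : Fin m, j ≠ 0 → j' ≠ 0 → v j = v j' → j = j' := by
      intro j j' hj hj' hvv
      by_contra hne
      exact hdist j j' hj hj' hne hvv
    have hTne : ∀ j ∈ T, j ≠ (0 : Fin m) := by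
      intro j hj h
      exact hT0 (h ▸ hj)
    have hTsub : T ⊆ Finset.univ.erase 0 := fun j hj =>
      Finset.mem_erase.mpr ⟨hTne j hj, Finset.mem_univ _⟩
    have hvT : ∀ j ∈ T, v j = List.replicate k x ++ (v j).drop k := by
      intro j hj
      conv_lhs => rw [← List.take_append_drop k (v j), (hTA j hj).2.1]
    set W : Finset (List (Fin n)) := T.image (fun j => (v j).drop k) with hW
    set U : Finset (List (Fin n)) := ((Finset.univ.erase 0) \ T).image v with hU
    have hWB : W ⊆ B n (a - k) x := by
      intro w hw
      obtain ⟨j, hj, rfl⟩ := Finset.mem_image.mp hw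
      refine mem_B.mpr ⟨?_, (hTA j hj).2.2⟩
      rw [List.length_drop, (hTA j hj).1]
    have hWc : W.card = i := by
      rw [hW, Finset.card_image_of_injOn, hTc]
      intro j hj j' hj' hvv
      replace hj := Finset.mem_coe.mp hj
      replace hj' := Finset.mem_coe.mp hj'
      refine hinj' j j' (hTne j hj) (hTne j' hj') ?_
      rw [hvT j hj, hvT j' hj']
      exact congrArg (fun w => List.replicate k x ++ w) hvv
    have hUB : U ⊆ avoidF n a k x W := by
      intro u hu
      obtain ⟨j, hj, rfl⟩ := Finset.mem_image.mp hu
      obtain ⟨hjd, hjT⟩ := Finset.mem_sdiff.mp hj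
      have hj0 : j ≠ 0 := Finset.ne_of_mem_erase hjd
      rw [avoidF, Finset.mem_sdiff]
      refine ⟨mem_B.mpr ⟨(hTB j hj0 hjT).1, (hTB j hj0 hjT).2⟩, ?_⟩
      intro hmem
      obtain ⟨w, hwW, hext⟩ := Finset.mem_biUnion.mp hmem
      obtain ⟨j₀, hj₀, rfl⟩ := Finset.mem_image.mp hwW
      obtain ⟨t, ht, hvt⟩ := mem_extF.mp hext
      exact hTP j₀ hj₀ j hj0 hjT ⟨t, hvt.symm⟩
    have hUc : U.card = m - 1 - i := by
      rw [hU, Finset.card_image_of_injOn, Finset.card_sdiff_of_subset hTsub,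
        Finset.card_erase_of_mem (Finset.mem_univ _), Finset.card_univ, Fintype.card_fin, hTc]
      intro j hj j' hj' hvv
      obtain ⟨hjd, -⟩ := Finset.mem_sdiff.mp (Finset.mem_coe.mp hj)
      obtain ⟨hjd', -⟩ := Finset.mem_sdiff.mp (Finset.mem_coe.mp hj')
      exact hinj' j j' (Finset.ne_of_mem_erase hjd) (Finset.ne_of_mem_erase hjd') hvv
    have hp : (⟨W, U⟩ : (_ : Finset (List (Fin n))) × Finset (List (Fin n))) ∈
        PF n m a k i x := by
      rw [PF, Finset.mem_sigma, Finset.mem_powersetCard, Finset.mem_powersetCard]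
      exact ⟨⟨hWB, hWc⟩, hUB, hUc⟩
    refine ⟨theta n k x ⟨W, U⟩, Finset.mem_image_of_mem _ hp, ?_⟩
    rw [mem_fiberF_iff x (card_theta hp hk1 him)]
    refine ⟨h0, hinj', ?_⟩
    have himg : W.image (fun w => List.replicate k x ++ w) = T.image v := by
      rw [hW, Finset.image_image]
      exact Finset.image_congr (fun j hj => (hvT j hj).symm)
    rw [keyF, theta, himg, hU, ← Finset.image_union, Finset.union_sdiff_of_subset hTsub]
  · rintro ⟨S, hS, hv⟩
    obtain ⟨p, hp, rfl⟩ := Finset.mem_image.mp hS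
    obtain ⟨h0, hinj, hkey⟩ := (mem_fiberF_iff x (card_theta hp hk1 him)).mp hv
    have hp' := hp
    rw [PF, Finset.mem_sigma, Finset.mem_powersetCard, Finset.mem_powersetCard] at hp'
    obtain ⟨⟨hW1, hW1c⟩, hU1, hU1c⟩ := hp'
    set W' : Finset (List (Fin n)) := p.1.image (fun w => List.replicate k x ++ w) with hW'
    have hmemS : ∀ j : Fin m, j ≠ 0 → v j ∈ W' ∪ p.2 := by
      intro j hj
      rw [← theta, ← hkey]
      exact Finset.mem_image_of_mem v (Finset.mem_erase.mpr ⟨hj, Finset.mem_univ _⟩)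
    set T : Finset (Fin m) := Finset.univ.filter (fun j => j ≠ 0 ∧ v j ∈ W') with hT
    have hTmem : ∀ j, j ∈ T ↔ j ≠ 0 ∧ v j ∈ W' := by
      intro j; simp [hT]
    refine ⟨h0, fun j j' hj hj' hne hvv => hne (hinj j j' hj hj' hvv), T, ?_, ?_, ?_, ?_, ?_⟩
    · intro h
      exact ((hTmem 0).mp h).1 rfl
    · have hTW : T.image v = W' := by
        ext u
        constructor
        · intro hu
          obtain ⟨j, hj, rfl⟩ := Finset.mem_image.mp hu
          exact ((hTmem j).mp hj).2
        · intro hu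
          have huS : u ∈ theta n k x p := Finset.mem_union_left _ hu
          rw [← hkey] at huS
          obtain ⟨j, hj, rfl⟩ := Finset.mem_image.mp huS
          exact Finset.mem_image_of_mem v ((hTmem j).mpr ⟨Finset.ne_of_mem_erase hj, hu⟩)
      have : (T.image v).card = T.card := by
        apply Finset.card_image_of_injOn
        intro j hj j' hj' hvv
        exact hinj j j' ((hTmem j).mp (Finset.mem_coe.mp hj)).1
          ((hTmem j').mp (Finset.mem_coe.mp hj')).1 hvv
      rw [← this, hTW, hW',
        Finset.card_image_of_injective _ (fun a b hab => List.append_cancel_left hab), hW1c]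
    · intro j hj
      obtain ⟨w, hw, hvw⟩ := Finset.mem_image.mp ((hTmem j).mp hj).2
      obtain ⟨hwl, hwx⟩ := mem_B.mp (hW1 hw)
      rw [← hvw]
      refine ⟨?_, ?_, ?_⟩
      · simp only [List.length_append, List.length_replicate, hwl]; omega
      · exact List.take_left' (by simp)
      · rw [List.drop_left' (by simp)]; exact hwx
    · intro j hj hjT
      have hv2 : v j ∈ p.2 := by
        rcases Finset.mem_union.mp (hmemS j hj) with h | h
        · exact absurd ((hTmem j).mpr ⟨hj, h⟩) hjT
        · exact h
      have := hU1 hv2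
      rw [avoidF, Finset.mem_sdiff, mem_B] at this
      exact ⟨this.1.1, this.1.2⟩
    · intro j hj j' hj' hjT' hpre
      obtain ⟨w, hw, hvw⟩ := Finset.mem_image.mp ((hTmem j).mp hj).2
      have hdropw : (v j).drop k = w := by rw [← hvw, List.drop_left' (by simp)]
      have hv2 : v j' ∈ p.2 := by
        rcases Finset.mem_union.mp (hmemS j' hj') with h | h
        · exact absurd ((hTmem j').mpr ⟨hj', h⟩) hjT'
        · exact h
      have havoid := hU1 hv2
      rw [avoidF, Finset.mem_sdiff] at havoid
      apply havoid.2
      obtain ⟨t, ht⟩ := hpre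
      rw [hdropw] at ht
      have hwl : w.length = a - k := (mem_B.mp (hW1 hw)).1
      have hvl : (v j').length = a := (mem_B.mp havoid.1).1
      have htl : t.length = k := by
        have := congrArg List.length ht
        simp only [List.length_append, hwl, hvl] at this
        omega
      exact Finset.mem_biUnion.mpr ⟨w, hw, mem_extF.mpr ⟨t, htl, ht.symm⟩⟩

end S16

/-- Lemma 2: `|K_{x,k,i}| = (m-1)! · C(n^{a-k}-n^{a-k-1}, i) · C(n^a-n^{a-1}-i·n^k, m-1-i)`. -/
theorem stmt16 (n m a : ℕ) [NeZero m] (hn : 2 ≤ n) (hm : 2 ≤ m) (ha : 2 ≤ a)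
    (hcard : m - 1 ≤ n ^ a - n ^ (a - 1)) (x : Fin n) (k i : ℕ)
    (hi1 : 1 ≤ i) (him : i ≤ m - 1) (hk1 : 1 ≤ k) (hka : k ≤ a - 1) :
    (K n m a x k i).ncard =
      (m - 1).factorial * (n ^ (a - k) - n ^ (a - k - 1)).choose i *
        (n ^ a - n ^ (a - 1) - i * n ^ k).choose (m - 1 - i) := by
  
  have hGcard : ∀ S ∈ S16.GF n m a k i x, S.card = m - 1 := by
    intro S hS
    obtain ⟨p, hp, rfl⟩ := Finset.mem_image.mp hS
    exact S16.card_theta hp hk1 him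
  have hKeq : K n m a x k i =
      ↑((S16.GF n m a k i x).biUnion (S16.fiberF n m x)) := by
    ext v
    rw [Finset.coe_biUnion]
    simp only [Set.mem_iUnion, Finset.mem_coe]
    exact (S16.K_iff n m a x k i hm ha him hk1 hka v).trans
      ⟨fun ⟨S, h1, h2⟩ => ⟨S, h1, h2⟩, fun ⟨S, h1, h2⟩ => ⟨S, h1, h2⟩⟩
  have hdisj : ∀ S ∈ S16.GF n m a k i x, ∀ S' ∈ S16.GF n m a k i x, S ≠ S' →
      Disjoint (S16.fiberF n m x S) (S16.fiberF n m x S') := by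
    intro S hS S' hS' hne
    rw [Finset.disjoint_left]
    intro v h1 h2
    have k1 := ((S16.mem_fiberF_iff x (hGcard S hS)).mp h1).2.2
    have k2 := ((S16.mem_fiberF_iff x (hGcard S' hS')).mp h2).2.2
    exact hne (k1 ▸ k2)
  rw [hKeq, Set.ncard_coe_finset, Finset.card_biUnion hdisj,
    Finset.sum_congr rfl (fun S hS => S16.card_fiberF x (hGcard S hS)),
    Finset.sum_const, smul_eq_mul, S16.card_GF x hk1 hka (by omega)]
  ring
end

section
/- Let n ≥ 2, m ≥ 2, and let a ≥ 2 be an integer. Fix a letter x ∈ X, and integers 1 ≤ i ≤ m−1, 1 ≤ k ≤ a−1. Then every code C ∈ K_{x,k,i} is uniquely decodable but is not a prefix code; its length distribution is L = (1, a, …, a) of length m. -/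
open Finset Filter Topology

/-- Every code in `K_{x,k,i}` is uniquely decodable, is not a prefix code, and has
length distribution `(1, a, …, a)`. -/
theorem stmt17 (n m a : ℕ) [NeZero m] (hn : 2 ≤ n) (hm : 2 ≤ m) (ha : 2 ≤ a)
    (x : Fin n) (k i : ℕ) (hi1 : 1 ≤ i) (him : i ≤ m - 1) (hk1 : 1 ≤ k) (hka : k ≤ a - 1)
    (v : Fin m → List (Fin n)) (hv : v ∈ K n m a x k i) :
    IsUDCode v ∧ ¬ IsPrefixCode v ∧
      (v 0).length = 1 ∧ ∀ j : Fin m, j ≠ 0 → (v j).length = a := by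
  obtain ⟨h0, hdist, T, hT0, hTcard, hB, hC, hpre⟩ := hv
  have hrep : List.replicate k x = x :: List.replicate (k-1) x := by
    conv_lhs => rw [show k = (k-1)+1 by omega]
    rw [List.replicate_succ]
  have hlen : ∀ j : Fin m, j ≠ 0 → (v j).length = a := by
    intro j hj
    by_cases hjT : j ∈ T
    · exact (hB j hjT).1
    · exact (hC j hj hjT).1
  have hne : ∀ j : Fin m, v j ≠ [] := by
    intro j
    by_cases hj : j = 0
    · subst hj; rw [h0]; simp
    · intro h; have := hlen j hj; rw [h] at this; simp at this; omega
  have hinj : ∀ p q : Fin m, v p = v q → p = q := by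
    intro p q h
    by_cases hp : p = 0 <;> by_cases hq : q = 0
    · rw [hp, hq]
    · exfalso; have := hlen q hq; rw [← h, hp, h0] at this; simp at this; omega
    · exfalso; have := hlen p hp; rw [h, hq, h0] at this; simp at this; omega
    · by_contra hpq; exact hdist p q hp hq hpq h
  have hBdec : ∀ j ∈ T, v j = List.replicate k x ++ (v j).drop k := by
    intro j hj
    conv_lhs => rw [← List.take_append_drop k (v j)]
    rw [(hB j hj).2.1]
  have hwlen : ∀ j ∈ T, ((v j).drop k).length = a - k := by
    intro j hj; rw [List.length_drop, (hB j hj).1]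
  have hstart : ∀ j : Fin m, [x] <+: v j → j = 0 ∨ j ∈ T := by
    intro j hx
    by_cases hj : j = 0
    · left; exact hj
    · by_cases hjT : j ∈ T
      · right; exact hjT
      · exact absurd hx (hC j hj hjT).2
  -- Key lemma: a parse cannot produce a string of the form x^c ++ w ++ R with c < k,
  -- where w is nonempty, does not start with x, has length ≤ a, and is not a prefix
  -- of any word outside T.
  have A : ∀ w : List (Fin n), w ≠ [] → ¬ ([x] <+: w) → w.length ≤ a →
      (∀ j' : Fin m, j' ≠ 0 → j' ∉ T → ¬ w <+: v j') →
      ∀ c : ℕ, c < k → ∀ (s : List (Fin m)) (R : List (Fin n)), s ≠ [] →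
      (s.map v).flatten = List.replicate c x ++ (w ++ R) → False := by
    intro w hw1 hw2 hw3 hw4
    obtain ⟨w0, wt, rfl⟩ := List.exists_cons_of_ne_nil hw1
    have hw0 : w0 ≠ x := fun h => hw2 ⟨wt, by rw [h, List.singleton_append]⟩
    intro c
    induction c with
    | zero =>
      intro _ s R hs hflat
      obtain ⟨h, s', rfl⟩ := List.exists_cons_of_ne_nil hs
      simp only [List.map_cons, List.flatten_cons, List.replicate_zero,
        List.nil_append] at hflat
      obtain ⟨c0, vt, hvh⟩ := List.exists_cons_of_ne_nil (hne h)
      have hflat' := hflat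
      rw [hvh, List.cons_append, List.cons_append] at hflat'
      injection hflat' with hc0 _
      have hc0' : c0 = w0 := hc0
      have hh0 : h ≠ 0 := by
        intro he; rw [he, h0] at hvh
        injection hvh with h1 _
        exact hw0 (hc0' ▸ h1.symm)
      have hhT : h ∉ T := by
        intro hT'
        have hd := hBdec h hT'
        rw [hvh, hrep, List.cons_append] at hd
        injection hd with h1 _
        exact hw0 (hc0'.symm.trans h1)
      have hpw : (w0 :: wt) <+: v h := by
        refine List.prefix_of_prefix_length_le ⟨R, hflat.symm⟩ ⟨_, rfl⟩ ?_
        rw [hlen h hh0]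
        exact hw3
      exact hw4 h hh0 hhT hpw
    | succ c ihc =>
      intro hck s R hs hflat
      obtain ⟨h, s', rfl⟩ := List.exists_cons_of_ne_nil hs
      simp only [List.map_cons, List.flatten_cons] at hflat
      by_cases hh0 : h = 0
      · rw [hh0, h0] at hflat
        simp only [List.replicate_succ, List.cons_append, List.singleton_append,
          List.nil_append, List.append_assoc] at hflat
        injection hflat with _ htl
        have hs' : s' ≠ [] := by
          intro he; subst he
          simp at htl
        exact ihc (by omega) s' R hs' htl
      · have hxh : [x] <+: v h := by
          obtain ⟨c0, vt, hvh⟩ := List.exists_cons_of_ne_nil (hne h)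
          have hflat' := hflat
          rw [hvh, List.cons_append, List.replicate_succ, List.cons_append] at hflat'
          injection hflat' with hc0 _
          exact ⟨vt, by rw [hvh, hc0, List.singleton_append]⟩
        have hhT : h ∈ T := (hstart h hxh).resolve_left hh0
        have hd := hBdec h hhT
        rw [hd, List.append_assoc] at hflat
        have hksplit : List.replicate k x
            = List.replicate (c+1) x ++ List.replicate (k-(c+1)) x := by
          rw [← List.replicate_add]; congr 1; omega
        rw [hksplit, List.append_assoc] at hflat
        have hcl := List.append_cancel_left hflat
        have hr2 : List.replicate (k-(c+1)) x
            = x :: List.replicate (k-(c+1)-1) x := by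
          conv_lhs => rw [show k-(c+1) = (k-(c+1)-1)+1 by omega]
          rw [List.replicate_succ]
        rw [hr2, List.cons_append, List.cons_append] at hcl
        injection hcl with h1 _
        exact hw0 h1.symm
  have hflatne : ∀ s : List (Fin m), s ≠ [] → (s.map v).flatten ≠ [] := by
    intro s hs
    obtain ⟨h, s', rfl⟩ := List.exists_cons_of_ne_nil hs
    simp only [List.map_cons, List.flatten_cons]
    intro he
    exact hne h (List.append_eq_nil_iff.mp he).1
  -- the mixed case is impossible
  have hmix : ∀ (q : Fin m) (s' t' : List (Fin m)), q ≠ 0 →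
      x :: (s'.map v).flatten = v q ++ (t'.map v).flatten → False := by
    intro q s' t' hq heq
    have hxq : [x] <+: v q := by
      obtain ⟨c0, vt, hvq⟩ := List.exists_cons_of_ne_nil (hne q)
      have heq' := heq
      rw [hvq, List.cons_append] at heq'
      injection heq' with hc0 _
      exact ⟨vt, by rw [hvq, ← hc0, List.singleton_append]⟩
    have hqT : q ∈ T := (hstart q hxq).resolve_left hq
    have hw1 : (v q).drop k ≠ [] := by
      intro he
      have := hwlen q hqT
      rw [he] at this; simp at this; omega
    have heq2 : (s'.map v).flatten
        = List.replicate (k-1) x ++ ((v q).drop k ++ (t'.map v).flatten) := by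
      have := heq
      rw [hBdec q hqT, hrep] at this
      simp only [List.cons_append, List.append_assoc] at this
      injection this with _ h2
    have hs' : s' ≠ [] := by
      intro he; subst he
      simp only [List.map_nil, List.flatten_nil] at heq2
      have : (v q).drop k = [] ∧ _ := List.append_eq_nil_iff.mp (List.append_eq_nil_iff.mp heq2.symm).2
      exact hw1 this.1
    exact A ((v q).drop k) hw1 (hB q hqT).2.2
      (by rw [hwlen q hqT]; omega) (hpre q hqT) (k-1) (by omega) s'
      ((t'.map v).flatten) hs' heq2
  have main : ∀ s t : List (Fin m), s ≠ [] → t ≠ [] →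
      (s.map v).flatten = (t.map v).flatten → s = t := by
    intro s
    induction s with
    | nil => intro t hs; exact absurd rfl hs
    | cons p s' ih =>
      intro t _ ht hflat
      obtain ⟨q, t', rfl⟩ := List.exists_cons_of_ne_nil ht
      simp only [List.map_cons, List.flatten_cons] at hflat
      have hpq : p = q := by
        by_cases hp : p = 0 <;> by_cases hq : q = 0
        · rw [hp, hq]
        · exfalso
          rw [hp, h0] at hflat
          exact hmix q s' t' hq (by simpa using hflat)
        · exfalso
          rw [hq, h0] at hflat
          exact hmix p t' s' hp (by simpa using hflat.symm)
        · have := List.append_inj hflat (by rw [hlen p hp, hlen q hq])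
          exact hinj p q this.1
      subst hpq
      have htail : (s'.map v).flatten = (t'.map v).flatten :=
        List.append_cancel_left hflat
      by_cases hs' : s' = []
      · subst hs'
        by_cases ht' : t' = []
        · rw [ht']
        · exact absurd htail.symm (by simpa using hflatne t' ht')
      · have ht' : t' ≠ [] := by
          intro h; subst h
          exact hflatne s' hs' (by simpa using htail)
        rw [ih t' hs' ht' htail]
  refine ⟨main, ?_, by rw [h0]; rfl, hlen⟩
  rintro ⟨_, _, hpc⟩
  have hTne : T.Nonempty := Finset.card_pos.mp (by rw [hTcard]; omega)
  obtain ⟨j, hjT⟩ := hTne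
  have hj0 : (0 : Fin m) ≠ j := fun h => hT0 (h ▸ hjT)
  apply hpc 0 j hj0
  rw [h0, hBdec j hjT, hrep, List.cons_append]
  exact ⟨List.replicate (k-1) x ++ (v j).drop k, rfl⟩
end

section
/- For any integers n ≥ 2 and a, b ≥ 1, the number of uniquely decodable codes (v, w) over an n-letter alphabet with |v| = a and |w| = b equals n^{a+b} − n^{gcd(a,b)}. -/
open Finset Filter Topology

namespace StmtAux

variable {α : Type*}

def npow (z : List α) : ℕ → List α
  | 0 => []
  | k + 1 => z ++ npow z k

lemma npow_length (z : List α) (k : ℕ) : (npow z k).length = k * z.length := by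
  induction k with
  | zero => simp [npow]
  | succ k ih => simp [npow, ih]; ring

lemma npow_add (z : List α) (k l : ℕ) : npow z (k + l) = npow z k ++ npow z l := by
  induction k with
  | zero => simp [npow]
  | succ k ih =>
    have : k + 1 + l = (k + l) + 1 := by omega
    rw [this]
    simp [npow, ih, List.append_assoc]

lemma npow_comm (z : List α) (k l : ℕ) : npow z k ++ npow z l = npow z l ++ npow z k := by
  rw [← npow_add, ← npow_add, Nat.add_comm]

lemma comm_struct : ∀ N (v w : List α), v.length + w.length = N → v ++ w = w ++ v →
    ∃ z : List α, z.length = Nat.gcd v.length w.length ∧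
      v = npow z (v.length / Nat.gcd v.length w.length) ∧
      w = npow z (w.length / Nat.gcd v.length w.length) := by
  intro N
  induction N using Nat.strong_induction_on with
  | _ N ih =>
  have key : ∀ v w : List α, v.length + w.length = N → v ++ w = w ++ v →
      v.length ≤ w.length →
      ∃ z : List α, z.length = Nat.gcd v.length w.length ∧
        v = npow z (v.length / Nat.gcd v.length w.length) ∧
        w = npow z (w.length / Nat.gcd v.length w.length) := by
    intro v w hN h hab
    by_cases hv : v.length = 0
    · have hv' : v = [] := List.length_eq_zero_iff.mp hv
      subst hv'
      rcases eq_or_ne w [] with rfl | hw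
      · exact ⟨[], by simp, by simp [npow], by simp [npow]⟩
      · have hb : w.length ≠ 0 := fun h0 => hw (List.length_eq_zero_iff.mp h0)
        refine ⟨w, by simp, by simp [npow], ?_⟩
        rw [List.length_nil, Nat.gcd_zero_left, Nat.div_self (Nat.pos_of_ne_zero hb)]
        simp [npow]
    · have hvw : v = w.take v.length := by
        have h1 : (v ++ w).take v.length = v := List.take_left
        rw [h, List.take_append_of_le_length hab] at h1
        exact h1.symm
      set z := w.drop v.length with hzdef
      have hw2 : w = v ++ z := by
        nth_rewrite 1 [← List.take_append_drop v.length w]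
        rw [← hvw]
      have hcomm : v ++ z = z ++ v := by
        apply List.append_cancel_left (as := v)
        have h2 := h
        rw [hw2] at h2
        rw [h2, List.append_assoc]
      have hzl : z.length = w.length - v.length := List.length_drop
      obtain ⟨z₀, hl, hv0, hz0⟩ :=
        ih (v.length + z.length) (by omega) v z rfl hcomm
      have hg : Nat.gcd v.length z.length = Nat.gcd v.length w.length := by
        rw [hzl, Nat.gcd_sub_self_right hab]
      rw [hg] at hl hv0 hz0
      have hga : Nat.gcd v.length w.length ∣ v.length := Nat.gcd_dvd_left _ _
      have hdiv : v.length / Nat.gcd v.length w.length +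
          z.length / Nat.gcd v.length w.length = w.length / Nat.gcd v.length w.length := by
        rw [← Nat.add_div_of_dvd_right hga, hzl, Nat.add_sub_cancel' hab]
      refine ⟨z₀, hl, hv0, ?_⟩
      calc w = v ++ z := hw2
        _ = npow z₀ (v.length / Nat.gcd v.length w.length) ++
              npow z₀ (z.length / Nat.gcd v.length w.length) := by rw [← hv0, ← hz0]
        _ = npow z₀ (v.length / Nat.gcd v.length w.length +
              z.length / Nat.gcd v.length w.length) := (npow_add _ _ _).symm
        _ = npow z₀ (w.length / Nat.gcd v.length w.length) := by rw [hdiv]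
  intro v w hN h
  rcases le_total v.length w.length with hab | hba
  · exact key v w hN h hab
  · obtain ⟨z, h1, h2, h3⟩ := key w v (by omega) h.symm hba
    rw [Nat.gcd_comm w.length v.length] at h1 h2 h3
    exact ⟨z, h1, h3, h2⟩

lemma strip {m : ℕ} (c : Fin m → List α) (hc : ∀ k, c k ≠ []) :
    ∀ s t : List (Fin m), (s.map c).flatten = (t.map c).flatten → s ≠ t →
      ∃ (i : Fin m) (s' : List (Fin m)) (j : Fin m) (t' : List (Fin m)),
        i ≠ j ∧ ((i :: s').map c).flatten = ((j :: t').map c).flatten := by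
  intro s
  induction s with
  | nil =>
    intro t he hne
    exfalso
    cases t with
    | nil => exact hne rfl
    | cons j t' =>
      simp only [List.map_nil, List.flatten_nil, List.map_cons, List.flatten_cons] at he
      exact hc j (List.append_eq_nil_iff.mp he.symm).1
  | cons i s' ihs =>
    intro t he hne
    cases t with
    | nil =>
      exfalso
      simp only [List.map_nil, List.flatten_nil, List.map_cons, List.flatten_cons] at he
      exact hc i (List.append_eq_nil_iff.mp he).1
    | cons j t' =>
      by_cases hij : i = j
      · subst hij
        simp only [List.map_cons, List.flatten_cons] at he
        have he' := List.append_cancel_left he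
        have hne' : s' ≠ t' := fun h0 => hne (by rw [h0])
        exact ihs t' he' hne'
      · exact ⟨i, s', j, t', hij, he⟩

lemma replace (v z : List α) : ∀ u : List (Fin 2),
    ∃ r : List (Fin 2), (r.map ![v, z]).flatten = (u.map ![v, v ++ z]).flatten ∧
      (u ≠ [] → ∃ r', r = 0 :: r') := by
  intro u
  induction u with
  | nil => exact ⟨[], rfl, by simp⟩
  | cons k u' ih =>
    obtain ⟨r, hr, -⟩ := ih
    fin_cases k
    · refine ⟨0 :: r, ?_, fun _ => ⟨r, rfl⟩⟩
      simp [hr]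
    · refine ⟨0 :: 1 :: r, ?_, fun _ => ⟨1 :: r, rfl⟩⟩
      simp [hr, List.append_assoc]

lemma notud_comm : ∀ N (v w : List α), v.length + w.length = N → v ≠ [] → w ≠ [] →
    (∃ s t : List (Fin 2), s ≠ t ∧
      (s.map ![v, w]).flatten = (t.map ![v, w]).flatten) →
    v ++ w = w ++ v := by
  intro N
  induction N using Nat.strong_induction_on with
  | _ N ih =>
  have key : ∀ v w : List α, v.length + w.length = N → v ≠ [] → w ≠ [] →
      v.length ≤ w.length →
      (∃ s t : List (Fin 2), s ≠ t ∧
        (s.map ![v, w]).flatten = (t.map ![v, w]).flatten) →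
      v ++ w = w ++ v := by
    rintro v w hN hv hw hab ⟨s, t, hst, he⟩
    have hc : ∀ k : Fin 2, (![v, w] : Fin 2 → List α) k ≠ [] := by
      intro k; fin_cases k <;> simpa
    obtain ⟨i, s', j, t', hij, he'⟩ := strip ![v, w] hc s t he hst
    have hv1 : 0 < v.length := List.length_pos_iff.mpr hv
    have main : ∀ s' t' : List (Fin 2),
        v ++ (s'.map ![v, w]).flatten = w ++ (t'.map ![v, w]).flatten →
        v ++ w = w ++ v := by
      intro s' t' heq
      have hvw : v = w.take v.length := by
        have h1 : (v ++ (s'.map ![v, w]).flatten).take v.length = v := List.take_left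
        rw [heq, List.take_append_of_le_length hab] at h1
        exact h1.symm
      set z := w.drop v.length with hzdef
      have hw2 : w = v ++ z := by
        nth_rewrite 1 [← List.take_append_drop v.length w]
        rw [← hvw]
      rcases eq_or_ne z [] with hz0 | hz0
      · rw [hw2, hz0, List.append_nil]
      rcases eq_or_ne v z with hvz | hvz
      · rw [hw2, ← hvz, List.append_assoc]
      have heq2 : (s'.map ![v, w]).flatten = z ++ (t'.map ![v, w]).flatten := by
        apply List.append_cancel_left (as := v)
        rw [heq, hw2, List.append_assoc]
      obtain ⟨rA, hrA, hrA0⟩ := replace v z s'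
      obtain ⟨rB, hrB, -⟩ := replace v z t'
      rw [← hw2] at hrA hrB
      have hs'ne : s' ≠ [] := by
        intro h0
        rw [h0] at heq2
        simp only [List.map_nil, List.flatten_nil] at heq2
        exact hz0 (List.append_eq_nil_iff.mp heq2.symm).1
      obtain ⟨rA', hrA'⟩ := hrA0 hs'ne
      have hrel : (rA.map ![v, z]).flatten = ((1 :: rB).map ![v, z]).flatten := by
        rw [hrA, heq2]
        simp only [List.map_cons, List.flatten_cons, Matrix.cons_val_one,
          Matrix.head_cons, hrB, Matrix.cons_val_zero]
      have hne : rA ≠ 1 :: rB := by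
        rw [hrA']
        intro h0
        have := (List.cons.injEq _ _ _ _).mp h0
        exact absurd this.1 (by decide)
      have hzl : z.length = w.length - v.length := List.length_drop
      have hcm : v ++ z = z ++ v :=
        ih (v.length + z.length) (by omega) v z rfl hv hz0 ⟨rA, 1 :: rB, hne, hrel⟩
      rw [hw2, List.append_assoc, hcm]
    fin_cases i <;> fin_cases j <;>
      simp only [List.map_cons, List.flatten_cons, Matrix.cons_val_zero,
        Matrix.cons_val_one, Matrix.head_cons] at he' <;>
      first
        | exact absurd rfl hij
        | exact main s' t' he'
        | exact main t' s' he'.symm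
  rintro v w hN hv hw ⟨s, t, hst, he⟩
  rcases le_total v.length w.length with hab | hba
  · exact key v w hN hv hw hab ⟨s, t, hst, he⟩
  · have hσ : Function.Injective (![1, 0] : Fin 2 → Fin 2) := by decide
    have hcmp : (![w, v] : Fin 2 → List α) ∘ (![1, 0] : Fin 2 → Fin 2) = ![v, w] := by
      funext k; fin_cases k <;> rfl
    refine (key w v (by omega) hw hv hba
      ⟨s.map ![1, 0], t.map ![1, 0], ?_, ?_⟩).symm
    · intro h0
      exact hst (List.map_injective_iff.mpr hσ h0)
    · rw [List.map_map, List.map_map, hcmp]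
      exact he

lemma ud_iff (v w : List α) (hv : v ≠ []) (hw : w ≠ []) :
    IsUDCode ![v, w] ↔ v ++ w ≠ w ++ v := by
  constructor
  · intro hud hcomm
    have h01 : (([0, 1] : List (Fin 2)).map ![v, w]).flatten =
        (([1, 0] : List (Fin 2)).map ![v, w]).flatten := by
      simp only [List.map_cons, List.map_nil, List.flatten_cons, List.flatten_nil,
        List.append_nil, Matrix.cons_val_zero, Matrix.cons_val_one, Matrix.head_cons]
      exact hcomm
    have := hud [0, 1] [1, 0] (by simp) (by simp) h01
    exact absurd this (by decide)
  · intro hne s t hs ht he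
    by_contra hst
    exact hne (notud_comm _ v w rfl hv hw ⟨s, t, hst, he⟩)

end StmtAux


/-- Theorem 5: `|UD_n((a,b))| = n^{a+b} - n^{gcd(a,b)}`. -/
theorem stmt19 (n : ℕ) (hn : 2 ≤ n) (a b : ℕ) (ha : 1 ≤ a) (hb : 1 ≤ b) :
    {p : List (Fin n) × List (Fin n) |
        p.1.length = a ∧ p.2.length = b ∧ IsUDCode ![p.1, p.2]}.ncard =
      n ^ (a + b) - n ^ Nat.gcd a b := by
  classical
  have hga : Nat.gcd a b ∣ a := Nat.gcd_dvd_left a b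
  have hgb : Nat.gcd a b ∣ b := Nat.gcd_dvd_right a b
  have hgpos : 0 < Nat.gcd a b := Nat.gcd_pos_of_pos_left b (by omega)
  set T : Set (List (Fin n) × List (Fin n)) := {p | p.1.length = a ∧ p.2.length = b} with hTdef
  set C : Set (List (Fin n) × List (Fin n)) :=
    {p | p.1.length = a ∧ p.2.length = b ∧ p.1 ++ p.2 = p.2 ++ p.1} with hCdef
  have hSTC : {p : List (Fin n) × List (Fin n) |
      p.1.length = a ∧ p.2.length = b ∧ IsUDCode ![p.1, p.2]} = T \ C := by
    ext ⟨v, w⟩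
    simp only [hTdef, hCdef, Set.mem_setOf_eq, Set.mem_diff]
    constructor
    · rintro ⟨h1, h2, h3⟩
      have hv : v ≠ [] := by intro h0; rw [h0] at h1; simp at h1; omega
      have hw : w ≠ [] := by intro h0; rw [h0] at h2; simp at h2; omega
      refine ⟨⟨h1, h2⟩, ?_⟩
      rintro ⟨-, -, hcm⟩
      exact (StmtAux.ud_iff v w hv hw).mp h3 hcm
    · rintro ⟨⟨h1, h2⟩, hnc⟩
      have hv : v ≠ [] := by intro h0; rw [h0] at h1; simp at h1; omega
      have hw : w ≠ [] := by intro h0; rw [h0] at h2; simp at h2; omega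
      refine ⟨h1, h2, (StmtAux.ud_iff v w hv hw).mpr ?_⟩
      intro hcm
      exact hnc ⟨h1, h2, hcm⟩
  have fTinj : Function.Injective
      (fun q : List.Vector (Fin n) a × List.Vector (Fin n) b => (q.1.1, q.2.1)) := by
    rintro ⟨⟨x, hx⟩, ⟨y, hy⟩⟩ ⟨⟨x', hx'⟩, ⟨y', hy'⟩⟩ h
    simp only [Prod.mk.injEq] at h
    exact Prod.ext (Subtype.ext h.1) (Subtype.ext h.2)
  have hT : T = Set.range
      (fun q : List.Vector (Fin n) a × List.Vector (Fin n) b => (q.1.1, q.2.1)) := by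
    ext ⟨v, w⟩
    simp only [hTdef, Set.mem_setOf_eq, Set.mem_range]
    constructor
    · rintro ⟨h1, h2⟩
      exact ⟨(⟨v, h1⟩, ⟨w, h2⟩), rfl⟩
    · rintro ⟨⟨⟨x, hx⟩, ⟨y, hy⟩⟩, h⟩
      simp only [Prod.mk.injEq] at h
      exact ⟨h.1 ▸ hx, h.2 ▸ hy⟩
  have hTcard : T.ncard = n ^ (a + b) := by
    rw [hT, ← Nat.card_coe_set_eq, Nat.card_range_of_injective fTinj,
      Nat.card_eq_fintype_card, Fintype.card_prod, card_vector, card_vector,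
      Fintype.card_fin, pow_add]
  set F : List.Vector (Fin n) (Nat.gcd a b) → List (Fin n) × List (Fin n) :=
    fun z => (StmtAux.npow z.1 (a / Nat.gcd a b), StmtAux.npow z.1 (b / Nat.gcd a b))
    with hFdef
  have hFinj : Function.Injective F := by
    rintro ⟨z, hz⟩ ⟨z', hz'⟩ h
    simp only [hFdef, Prod.mk.injEq] at h
    have hq : a / Nat.gcd a b ≠ 0 := by
      intro h0
      have := Nat.div_mul_cancel hga
      rw [h0] at this
      simp at this
      omega
    obtain ⟨k, hk⟩ := Nat.exists_eq_succ_of_ne_zero hq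
    have h1 := h.1
    rw [hk] at h1
    simp only [StmtAux.npow] at h1
    exact Subtype.ext (List.append_inj_left h1 (by rw [hz, hz']))
  have hCF : C = Set.range F := by
    ext ⟨v, w⟩
    simp only [hCdef, Set.mem_setOf_eq, Set.mem_range]
    constructor
    · rintro ⟨h1, h2, h3⟩
      obtain ⟨z, hz1, hz2, hz3⟩ := StmtAux.comm_struct (v.length + w.length) v w rfl h3
      rw [h1, h2] at hz1 hz2 hz3
      exact ⟨⟨z, hz1⟩, by simp only [hFdef, Prod.mk.injEq]; exact ⟨hz2.symm, hz3.symm⟩⟩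
    · rintro ⟨⟨z, hz⟩, h⟩
      simp only [hFdef, Prod.mk.injEq] at h
      obtain ⟨hv, hw⟩ := h
      subst hv; subst hw
      refine ⟨?_, ?_, StmtAux.npow_comm _ _ _⟩
      · rw [StmtAux.npow_length, hz]
        exact Nat.div_mul_cancel hga
      · rw [StmtAux.npow_length, hz]
        exact Nat.div_mul_cancel hgb
  have hCfin : C.Finite := by rw [hCF]; exact Set.finite_range _
  have hCcard : C.ncard = n ^ Nat.gcd a b := by
    rw [hCF, ← Nat.card_coe_set_eq, Nat.card_range_of_injective hFinj,
      Nat.card_eq_fintype_card, card_vector, Fintype.card_fin]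
  have hCT : C ⊆ T := fun p hp => ⟨hp.1, hp.2.1⟩
  rw [hSTC, Set.ncard_diff hCT hCfin, hTcard, hCcard]
end
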